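/- Suppose (U'₁,U'₂,<') is the result of applying a case II coherent extended Nielsen transformation to a coherent extended word equation (U₁,U₂,<) whose cut graph G_{U₁,U₂,<} is acyclic. Then the sum over all (i,j) ∈ B'⁺ of the fecundities f_{U'₁,U'₂,<'}(i,j) is strictly less than f_{U₁,U₂,<}(2,1). -/

import Mathlib

open scoped Classical

namespace ExtWordEq

/-- The type of (candidate) boundary orders: relations on pairs (i,j). -/
abbrev BRel : Type := ℕ × ℕ → ℕ × ℕ → Prop

variable {X : Type*}

/-- The `i`-th side of the word equation (`i = 1` gives `U₁`, anything else `U₂`). -/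
def word (U₁ U₂ : List X) (i : ℕ) : List X := if i = 1 then U₁ else U₂

/-- The variable `U_{i,j}` (1-indexed), as an optional value. -/
def letter (U₁ U₂ : List X) (b : ℕ × ℕ) : Option X := (word U₁ U₂ b.1)[b.2 - 1]?

/-- `b` is a boundary of the word equation `(U₁, U₂)`. -/
def Boundary (U₁ U₂ : List X) (b : ℕ × ℕ) : Prop :=
  (b.1 = 1 ∨ b.1 = 2) ∧ 1 ≤ b.2 ∧ b.2 ≤ (word U₁ U₂ b.1).length

/-- `b` is a boundary of `(U₁, U₂)` or one of the conventional boundaries `(1,0)`, `(2,0)`. -/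
def EBoundary (U₁ U₂ : List X) (b : ℕ × ℕ) : Prop :=
  (b.1 = 1 ∨ b.1 = 2) ∧ b.2 ≤ (word U₁ U₂ b.1).length

/-- Incomparability `a ≈ b` for a strict order. -/
def Incomp (lt : BRel) (a b : ℕ × ℕ) : Prop := ¬ lt a b ∧ ¬ lt b a

/-- `lt` is a boundary order for the word equation `(U₁, U₂)`:
a strict weak order on the boundaries (together with the conventional boundaries
`(1,0) ≈ (2,0)`), extending `(i,j) < (i,j+1)` and with `(1,m) ≈ (2,n)`. -/
structure BoundaryOrder (U₁ U₂ : List X) (lt : BRel) : Prop where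
  irrefl : ∀ a, EBoundary U₁ U₂ a → ¬ lt a a
  trans : ∀ a b c, EBoundary U₁ U₂ a → EBoundary U₁ U₂ b → EBoundary U₁ U₂ c →
    lt a b → lt b c → lt a c
  incomp_trans : ∀ a b c, EBoundary U₁ U₂ a → EBoundary U₁ U₂ b → EBoundary U₁ U₂ c →
    Incomp lt a b → Incomp lt b c → Incomp lt a c
  succ : ∀ i j : ℕ, EBoundary U₁ U₂ (i, j + 1) → lt (i, j) (i, j + 1)
  top : Incomp lt (1, U₁.length) (2, U₂.length)
  bot : Incomp lt (1, 0) (2, 0)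

/-- `L(U_{i,1} U_{i,2} ⋯ U_{i,j})` where `L` is the additive extension of a length
assignment on variables. -/
def prefixLen (U₁ U₂ : List X) (L : X → ℕ) (b : ℕ × ℕ) : ℕ :=
  (((word U₁ U₂ b.1).take b.2).map L).sum

/-- The extended word equation `(U₁, U₂, lt)` is coherent. -/
def Coherent (U₁ U₂ : List X) (lt : BRel) : Prop :=
  ∃ L : X → ℕ, (∀ x, 0 < L x) ∧
    ∀ a b, Boundary U₁ U₂ a → Boundary U₁ U₂ b →
      (lt a b ↔ prefixLen U₁ U₂ L a < prefixLen U₁ U₂ L b)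

/-- The boundary `a` cuts the boundary `b`. -/
def Cuts (U₁ U₂ : List X) (lt : BRel) (a b : ℕ × ℕ) : Prop :=
  Boundary U₁ U₂ a ∧ Boundary U₁ U₂ b ∧ a ≠ b ∧
    lt (a.1, a.2 - 1) b ∧ lt (b.1, b.2 - 1) a

/-- The boundary `a` mirrors the boundary `b`. -/
def Mirrors (U₁ U₂ : List X) (lt : BRel) (a b : ℕ × ℕ) : Prop :=
  Boundary U₁ U₂ a ∧ Boundary U₁ U₂ b ∧ letter U₁ U₂ a = letter U₁ U₂ b ∧
    (¬ Incomp lt a b ∨ ¬ Incomp lt (a.1, a.2 - 1) (b.1, b.2 - 1))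

/-- Edge relation of the cut graph `G_{U₁,U₂,<}`. -/
def CutEdge (U₁ U₂ : List X) (lt : BRel) (a b : ℕ × ℕ) : Prop :=
  ∃ c, Cuts U₁ U₂ lt a c ∧ Mirrors U₁ U₂ lt c b

/-- `w 0, w 1, …, w n` is a cycle (of length `n ≥ 1`) in the cut graph. -/
def IsCycle (U₁ U₂ : List X) (lt : BRel) (n : ℕ) (w : ℕ → ℕ × ℕ) : Prop :=
  0 < n ∧ w n = w 0 ∧ ∀ k < n, CutEdge U₁ U₂ lt (w k) (w (k + 1))

/-- The cut graph `G_{U₁,U₂,<}` is acyclic. -/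
def Acyclic (U₁ U₂ : List X) (lt : BRel) : Prop :=
  ¬ ∃ n w, IsCycle U₁ U₂ lt n w

variable [DecidableEq X]

/-- Case I extended Nielsen transformation (here `x = U_{1,1}`, `y = U_{2,1}`,
and `T(y) = x`). -/
def NielsenI (U₁ U₂ : List X) (lt : BRel) (U₁' U₂' : List X) (lt' : BRel) : Prop :=
  ∃ x y : X, U₁.head? = some x ∧ U₂.head? = some y ∧
    Incomp lt (1, 1) (2, 1) ∧
    U₁' = (U₁.map fun z => if z = y then x else z).tail ∧
    U₂' = (U₂.map fun z => if z = y then x else z).tail ∧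
    BoundaryOrder U₁' U₂' lt' ∧
    ∀ a b : ℕ × ℕ, EBoundary U₁' U₂' a → EBoundary U₁' U₂' b →
      (lt' a b ↔ lt (a.1, a.2 + 1) (b.1, b.2 + 1))

/-- The substitution `T(x) = y x` (identity on other variables), applied to a word. -/
def expand (x y : X) (l : List X) : List X :=
  l.flatMap fun z => if z = x then [y, x] else [z]

/-- The map `μ(i,j) = j + #{j' ≤ j : U_{i,j'} = x} − 1` (as a map on boundaries),
where `x = U_{1,1}`. -/
def mu (U₁ U₂ : List X) (x : X) (b : ℕ × ℕ) : ℕ × ℕ :=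
  (b.1, b.2 + ((word U₁ U₂ b.1).take b.2).count x - 1)

/-- The map `ν(i,j) = j − #{j' ≤ j : U'_{i,j'} = x} + 1` (as a map on boundaries),
where `x = U_{1,1}`. -/
def nu (U₁' U₂' : List X) (x : X) (b : ℕ × ℕ) : ℕ × ℕ :=
  (b.1, b.2 - ((word U₁' U₂' b.1).take b.2).count x + 1)

/-- Membership in `B⁻ = B ∖ {(2,1)}`. -/
def Bminus (U₁ U₂ : List X) (b : ℕ × ℕ) : Prop := Boundary U₁ U₂ b ∧ b ≠ (2, 1)

/-- Membership in `B'⁻ = {(i, μ(i,j)) : (i,j) ∈ B⁻}` (`x = U_{1,1}`). -/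
def Bpminus (U₁ U₂ : List X) (x : X) (b' : ℕ × ℕ) : Prop :=
  ∃ b, Bminus U₁ U₂ b ∧ mu U₁ U₂ x b = b'

/-- Case II extended Nielsen transformation, with the heads `x = U_{1,1}`,
`y = U_{2,1}` made explicit. -/
def NielsenIIxy (U₁ U₂ : List X) (lt : BRel) (U₁' U₂' : List X) (lt' : BRel)
    (x y : X) : Prop :=
  U₁.head? = some x ∧ U₂.head? = some y ∧
  lt (2, 1) (1, 1) ∧
  U₁' = (expand x y U₁).tail ∧
  U₂' = (expand x y U₂).tail ∧
  BoundaryOrder U₁' U₂' lt' ∧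
  ∀ a b, Bpminus U₁ U₂ x a → Bpminus U₁ U₂ x b →
    (lt' a b ↔ lt (nu U₁' U₂' x a) (nu U₁' U₂' x b))

/-- Case II extended Nielsen transformation. -/
def NielsenII (U₁ U₂ : List X) (lt : BRel) (U₁' U₂' : List X) (lt' : BRel) : Prop :=
  ∃ x y : X, NielsenIIxy U₁ U₂ lt U₁' U₂' lt' x y

/-- The dual boundary order. -/
def dualRel (lt : BRel) : BRel := fun a b => lt (3 - a.1, a.2) (3 - b.1, b.2)

/-- Case III extended Nielsen transformation: case II applied to the dual,
then dualized back. -/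
def NielsenIII (U₁ U₂ : List X) (lt : BRel) (U₁' U₂' : List X) (lt' : BRel) : Prop :=
  NielsenII U₂ U₁ (dualRel lt) U₂' U₁' (dualRel lt')

/-- `(U₁', U₂', lt')` is an extended Nielsen transformation of the nontrivial coherent
extended word equation `(U₁, U₂, lt)`. -/
def ExtNielsen (U₁ U₂ : List X) (lt : BRel) (U₁' U₂' : List X) (lt' : BRel) : Prop :=
  U₁ ≠ [] ∧ U₂ ≠ [] ∧ BoundaryOrder U₁ U₂ lt ∧ Coherent U₁ U₂ lt ∧
    (NielsenI U₁ U₂ lt U₁' U₂' lt' ∨ NielsenII U₁ U₂ lt U₁' U₂' lt' ∨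
      NielsenIII U₁ U₂ lt U₁' U₂' lt')

/-- A coherent extended Nielsen transformation. -/
def CohNielsen (U₁ U₂ : List X) (lt : BRel) (U₁' U₂' : List X) (lt' : BRel) : Prop :=
  ExtNielsen U₁ U₂ lt U₁' U₂' lt' ∧ Coherent U₁' U₂' lt'

/-- `(U₁, U₂, lt)` is (strongly) terminating: there is no infinite sequence of coherent
extended Nielsen transformations starting from it. -/
def Terminating (U₁ U₂ : List X) (lt : BRel) : Prop :=
  ¬ ∃ f : ℕ → List X × List X × BRel,
    f 0 = (U₁, U₂, lt) ∧
    ∀ n, CohNielsen (f n).1 (f n).2.1 (f n).2.2 (f (n + 1)).1 (f (n + 1)).2.1 (f (n + 1)).2.2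


/-- The finite set of boundaries of `(U₁, U₂)`. -/
def boundaryFinset (U₁ U₂ : List X) : Finset (ℕ × ℕ) :=
  ((Finset.range U₁.length).image fun j => (1, j + 1)) ∪
    ((Finset.range U₂.length).image fun j => (2, j + 1))

/-- `f` is the fecundity function of `(U₁, U₂, lt)`: on every boundary `b`,
`f b = 1 + max over boundaries c cut by b of (sum over boundaries d mirrored by c of f d)`. -/
def IsFecundity (U₁ U₂ : List X) (lt : BRel) (f : ℕ × ℕ → ℕ) : Prop :=
  ∀ b ∈ boundaryFinset U₁ U₂,
    f b = 1 + ((boundaryFinset U₁ U₂).filter fun c => Cuts U₁ U₂ lt b c).sup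
      fun c => ((boundaryFinset U₁ U₂).filter fun d => Mirrors U₁ U₂ lt c d).sum f


section ListLemmas

variable {X : Type*} [DecidableEq X] {x y : X}

/-- index map -/
def mf (x : X) [DecidableEq X] (l : List X) (j : ℕ) : ℕ := j + (l.take j).count x

lemma mf_zero (l : List X) : mf x l 0 = 0 := rfl

lemma count_take_le_succ (l : List X) (j : ℕ) :
    (l.take j).count x ≤ (l.take (j+1)).count x :=
  List.IsPrefix.count_le x (by rw [List.take_succ]; exact ⟨_, rfl⟩)

lemma count_take_succ_le (l : List X) (j : ℕ) :
    (l.take (j+1)).count x ≤ (l.take j).count x + 1 := by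
  rw [List.take_succ, List.count_append]
  have : (l[j]?.toList).count x ≤ 1 := by
    cases h : l[j]? <;> simp [List.count_cons]
    split <;> simp
  omega

lemma mf_strictMono (l : List X) : StrictMono (mf x l) := by
  apply strictMono_nat_of_lt_succ
  intro j
  have := count_take_le_succ (x := x) l j
  unfold mf; omega

lemma mf_succ (l : List X) {j : ℕ} (hj : j < l.length) :
    mf x l (j+1) = mf x l j + (if l[j] = x then 2 else 1) := by
  have hc : (l.take (j+1)).count x = (l.take j).count x + (if l[j] = x then 1 else 0) := by
    rw [List.take_succ, List.getElem?_eq_getElem hj, Option.toList_some, List.count_append,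
      List.count_singleton']
  unfold mf
  rw [hc]
  split <;> omega

lemma expand_nil : expand x y ([] : List X) = [] := rfl

lemma expand_cons (a : X) (t : List X) :
    expand x y (a :: t) = (if a = x then [y,x] else [a]) ++ expand x y t := by
  simp only [expand, List.flatMap_cons]

lemma expand_append (s t : List X) :
    expand x y (s ++ t) = expand x y s ++ expand x y t := by
  simp [expand]

lemma length_expand (l : List X) :
    (expand x y l).length = l.length + l.count x := by
  induction l with
  | nil => simp [expand]
  | cons a t ih =>
    rw [expand_cons]
    by_cases h : a = x <;> simp [h, List.count_cons, ih] <;> omega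

lemma count_expand (hyx : y ≠ x) (l : List X) :
    (expand x y l).count x = l.count x := by
  induction l with
  | nil => simp [expand]
  | cons a t ih =>
    rw [expand_cons]
    by_cases h : a = x <;> simp [h, List.count_cons, List.count_append, ih, hyx] <;> omega

lemma length_expand_take (l : List X) {j : ℕ} (hj : j ≤ l.length) :
    (expand x y (l.take j)).length = mf x l j := by
  rw [length_expand]; unfold mf; rw [List.length_take]; omega

lemma mf_length (l : List X) : mf x l l.length = (expand x y l).length := by
  rw [length_expand]; unfold mf; simp

lemma mf_le_length (l : List X) {j : ℕ} (hj : j ≤ l.length) :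
    mf x l j ≤ (expand x y l).length := by
  rw [← mf_length (y := y)]
  exact (mf_strictMono l).monotone hj

lemma expand_take_succ (l : List X) {j : ℕ} (hj : j < l.length) :
    expand x y (l.take (j+1)) =
      expand x y (l.take j) ++ (if l[j] = x then [y,x] else [l[j]]) := by
  rw [List.take_succ, List.getElem?_eq_getElem hj, Option.toList_some, expand_append,
    expand_cons, expand_nil, List.append_nil]

lemma getElem?_expand_of_lt (l : List X) {j k : ℕ} (hj : j ≤ l.length) (hk : k < mf x l j) :
    (expand x y l)[k]? = (expand x y (l.take j))[k]? := by
  conv_lhs => rw [← List.take_append_drop j l, expand_append]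
  rw [List.getElem?_append, if_pos]
  rw [length_expand_take l hj]; exact hk

/-- the letter at a `μ`-image boundary. -/
lemma getElem?_expand_letter (l : List X) {j : ℕ} (hj : j < l.length) :
    (expand x y l)[mf x l j + (if l[j] = x then 1 else 0)]? = some l[j] := by
  have h2 : mf x l j + (if l[j] = x then 1 else 0) < mf x l (j+1) := by
    rw [mf_succ l hj]; split <;> omega
  rw [getElem?_expand_of_lt l (by omega) h2, expand_take_succ l hj,
    List.getElem?_append, if_neg (by rw [length_expand_take l (le_of_lt hj)]; omega),
    length_expand_take l (le_of_lt hj)]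
  by_cases h : l[j] = x <;> simp [h]

/-- the inserted `y` before an occurrence of `x`. -/
lemma getElem?_expand_y (l : List X) {j : ℕ} (hj : j < l.length) (hx : l[j] = x) :
    (expand x y l)[mf x l j]? = some y := by
  have h2 : mf x l j < mf x l (j+1) := mf_strictMono l (by omega)
  rw [getElem?_expand_of_lt l (by omega) h2, expand_take_succ l hj,
    List.getElem?_append, if_neg (by rw [length_expand_take l (le_of_lt hj)]; omega),
    length_expand_take l (le_of_lt hj)]
  simp [hx]

lemma exists_step (g : ℕ → ℕ) (n k : ℕ) (h0 : g 0 < k) (hn : k ≤ g n) :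
    ∃ j < n, g j < k ∧ k ≤ g (j+1) := by
  induction n with
  | zero => omega
  | succ m ih =>
    by_cases h : k ≤ g m
    · obtain ⟨j, hj1, hj2⟩ := ih h; exact ⟨j, by omega, hj2⟩
    · exact ⟨m, by omega, by omega, hn⟩

/-- classification of new boundaries on a tail word. -/
lemma expand_classify (l : List X) {k : ℕ} (h1 : 1 ≤ k) (h2 : k ≤ (expand x y l).length) :
    ∃ j, j < l.length ∧
      ((k = mf x l (j+1)) ∨ (l[j]? = some x ∧ k = mf x l j + 1)) := by
  rw [← mf_length (x := x) (y := y)] at h2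
  obtain ⟨j, hj, hlt, hle⟩ := exists_step (mf x l) l.length k (by rw [mf_zero]; omega) h2
  refine ⟨j, hj, ?_⟩
  rw [mf_succ l hj] at hle
  by_cases h : l[j] = x
  · rw [if_pos h] at hle
    rcases Nat.lt_or_ge k (mf x l j + 2) with h' | h'
    · right
      exact ⟨by rw [List.getElem?_eq_getElem hj, h], by omega⟩
    · left; rw [mf_succ l hj, if_pos h]; omega
  · rw [if_neg h] at hle; left; rw [mf_succ l hj, if_neg h]; omega

lemma expand_take (l : List X) {j : ℕ} (hj : j ≤ l.length) :
    (expand x y l).take (mf x l j) = expand x y (l.take j) := by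
  have h : expand x y l = expand x y (l.take j) ++ expand x y (l.drop j) := by
    rw [← expand_append, List.take_append_drop]
  rw [h, List.take_left' (length_expand_take l hj)]

end ListLemmas

section Generic
variable {X : Type*} [DecidableEq X]

lemma mem_boundaryFinset {U₁ U₂ : List X} {b : ℕ × ℕ} :
    b ∈ boundaryFinset U₁ U₂ ↔ Boundary U₁ U₂ b := by
  obtain ⟨i, j⟩ := b
  simp only [boundaryFinset, Finset.mem_union, Finset.mem_image, Finset.mem_range]
  constructor
  · rintro (⟨k, hk, h⟩ | ⟨k, hk, h⟩) <;> cases h <;>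
      refine ⟨by simp, by omega, ?_⟩ <;> simp [word] <;> omega
  · rintro ⟨h1 | h1, h2, h3⟩ <;> subst h1
    · exact Or.inl ⟨j - 1, by simp [word] at h3; omega, by simp; omega⟩
    · exact Or.inr ⟨j - 1, by simp [word] at h3; omega, by simp; omega⟩

lemma letter_eq_some {U₁ U₂ : List X} {b : ℕ × ℕ} (hb : Boundary U₁ U₂ b) :
    ∃ z, letter U₁ U₂ b = some z := by
  obtain ⟨h1, h2, h3⟩ := hb
  exact ⟨_, List.getElem?_eq_getElem (by omega)⟩

lemma prefixLen_zero (U₁ U₂ : List X) (L : X → ℕ) (i : ℕ) :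
    prefixLen U₁ U₂ L (i, 0) = 0 := by simp [prefixLen]

lemma prefixLen_succ {U₁ U₂ : List X} (L : X → ℕ) {i j : ℕ} {z : X}
    (hz : letter U₁ U₂ (i, j+1) = some z) :
    prefixLen U₁ U₂ L (i, j+1) = prefixLen U₁ U₂ L (i, j) + L z := by
  unfold letter at hz
  simp only [Nat.add_sub_cancel] at hz
  have hj : j < (word U₁ U₂ i).length := by
    by_contra h
    rw [List.getElem?_eq_none (by omega)] at hz
    simp at hz
  unfold prefixLen
  simp only
  rw [List.take_succ, hz, Option.toList_some, List.map_append, List.sum_append]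
  simp

lemma prefixLen_lt {U₁ U₂ : List X} {L : X → ℕ} (hL : ∀ z, 0 < L z) {i j k : ℕ}
    (hjk : j < k) (hk : k ≤ (word U₁ U₂ i).length) :
    prefixLen U₁ U₂ L (i, j) < prefixLen U₁ U₂ L (i, k) := by
  obtain ⟨d, rfl⟩ : ∃ d, k = j + 1 + d := ⟨k - (j+1), by omega⟩
  clear hjk
  induction d with
  | zero =>
    have hm : j < (word U₁ U₂ i).length := by omega
    have hz : letter U₁ U₂ (i, j+1) = some ((word U₁ U₂ i)[j]'hm) := by
      unfold letter
      simp only [Nat.add_sub_cancel]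
      exact List.getElem?_eq_getElem hm
    rw [show j + 1 + 0 = j + 1 from rfl, prefixLen_succ L hz]
    have := hL ((word U₁ U₂ i)[j]'hm)
    omega
  | succ e ih =>
    have hm : j + 1 + e < (word U₁ U₂ i).length := by omega
    have h1 := ih (by omega)
    have hz : letter U₁ U₂ (i, (j+1+e)+1) = some ((word U₁ U₂ i)[j+1+e]'hm) := by
      unfold letter
      simp only [Nat.add_sub_cancel]
      exact List.getElem?_eq_getElem hm
    have h2 := prefixLen_succ L hz
    have := hL ((word U₁ U₂ i)[j+1+e]'hm)
    have hee : j + 1 + (e + 1) = (j + 1 + e) + 1 := by omega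
    rw [hee, h2]
    omega

lemma prefixLen_le {U₁ U₂ : List X} {L : X → ℕ} (hL : ∀ z, 0 < L z) {i j k : ℕ}
    (hjk : j ≤ k) (hk : k ≤ (word U₁ U₂ i).length) :
    prefixLen U₁ U₂ L (i, j) ≤ prefixLen U₁ U₂ L (i, k) := by
  rcases Nat.lt_or_ge j k with h | h
  · exact le_of_lt (prefixLen_lt hL h hk)
  · have : j = k := by omega
    subst this; exact le_rfl

lemma prefixLen_pos {U₁ U₂ : List X} {L : X → ℕ} (hL : ∀ z, 0 < L z) {i j : ℕ}
    (h1 : 1 ≤ j) (hj : j ≤ (word U₁ U₂ i).length) :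
    0 < prefixLen U₁ U₂ L (i, j) := by
  have := prefixLen_lt (U₁ := U₁) (U₂ := U₂) hL (i := i) (j := 0) (k := j) (by omega) hj
  rw [prefixLen_zero] at this
  exact this

lemma boundary_pos {U₁ U₂ : List X} {L : X → ℕ} (hL : ∀ z, 0 < L z) {b : ℕ × ℕ}
    (hb : Boundary U₁ U₂ b) : 0 < prefixLen U₁ U₂ L b := by
  obtain ⟨i, j⟩ := b
  exact prefixLen_pos hL hb.2.1 hb.2.2

lemma EBoundary_zero {U₁ U₂ : List X} {i : ℕ} (hi : i = 1 ∨ i = 2) :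
    EBoundary U₁ U₂ (i, 0) := ⟨hi, Nat.zero_le _⟩

lemma EBoundary_of_boundary {U₁ U₂ : List X} {b : ℕ × ℕ} (hb : Boundary U₁ U₂ b) :
    EBoundary U₁ U₂ b := ⟨hb.1, hb.2.2⟩

lemma Incomp.symm {lt : BRel} {a b : ℕ × ℕ} (h : Incomp lt a b) : Incomp lt b a :=
  ⟨h.2, h.1⟩

lemma lt_zero {U₁ U₂ : List X} {lt : BRel} (hbo : BoundaryOrder U₁ U₂ lt)
    {c : ℕ × ℕ} (hc : Boundary U₁ U₂ c) {i : ℕ} (hi : i = 1 ∨ i = 2) :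
    lt (i, 0) c := by
  obtain ⟨i', j⟩ := c
  have key : ∀ k, 1 ≤ k → k ≤ (word U₁ U₂ i').length → lt (i', 0) (i', k) := by
    intro k
    induction k with
    | zero => omega
    | succ m ih =>
      intro _ hk2
      rcases Nat.eq_zero_or_pos m with h | h
      · subst h; exact hbo.succ i' 0 ⟨hc.1, hk2⟩
      · exact hbo.trans (i', 0) (i', m) (i', m+1) (EBoundary_zero hc.1) ⟨hc.1, Nat.le_of_succ_le hk2⟩
          ⟨hc.1, hk2⟩ (ih h (by omega)) (hbo.succ i' m ⟨hc.1, hk2⟩)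
  have hic : lt (i', 0) (i', j) := key j hc.2.1 hc.2.2
  by_cases hii : i = i'
  · rw [hii]; exact hic
  · have hbot : Incomp lt (i', 0) (i, 0) := by
      rcases hi with h | h <;> rcases hc.1 with h' | h' <;> subst h <;> subst h' <;>
        first
          | exact absurd rfl hii
          | exact hbo.bot
          | exact hbo.bot.symm
    by_contra h
    have h2 : ¬ lt ((i', j) : ℕ × ℕ) (i, 0) := fun hcl =>
      hbot.1 (hbo.trans _ _ _ (EBoundary_zero hc.1) (EBoundary_of_boundary hc)
        (EBoundary_zero hi) hic hcl)
    have hinc : Incomp lt (i, 0) (i', j) := ⟨h, h2⟩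
    have := hbo.incomp_trans _ _ _ (EBoundary_zero hc.1) (EBoundary_zero hi)
      (EBoundary_of_boundary hc) hbot hinc
    exact this.1 hic

lemma Boundary.pred {W₁ W₂ : List X} {b : ℕ × ℕ} (hb : Boundary W₁ W₂ b) (h : 2 ≤ b.2) :
    Boundary W₁ W₂ (b.1, b.2 - 1) := by
  obtain ⟨i, j⟩ := b
  obtain ⟨h1, h2, h3⟩ := hb
  simp only at h h3
  refine ⟨h1, by omega, ?_⟩
  show j - 1 ≤ (word W₁ W₂ i).length
  omega

end Generic

section Main
variable {X : Type*} [DecidableEq X]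

/-- membership in `D`: an occurrence of `x` other than the leading one of `U₁`. -/
def Dmem (U₁ U₂ : List X) (x : X) (d : ℕ × ℕ) : Prop :=
  Boundary U₁ U₂ d ∧ letter U₁ U₂ d = some x ∧ d ≠ (1,1)

/-- the new boundary sitting just after the `y` inserted in front of the occurrence `d` of `x`. -/
def plusb (U₁ U₂ : List X) (x : X) [DecidableEq X] (d : ℕ × ℕ) : ℕ × ℕ :=
  (d.1, d.2 + ((word U₁ U₂ d.1).take d.2).count x - 2)

/-- All data extracted from a case II coherent Nielsen transformation. -/
structure Ctx (U₁ U₂ U₁' U₂' t₁ t₂ : List X) (lt lt' : BRel) (x y : X)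
    (L L' : X → ℕ) : Prop where
  hyx : y ≠ x
  e1 : U₁ = x :: t₁
  e2 : U₂ = y :: t₂
  e1' : U₁' = x :: expand x y t₁
  e2' : U₂' = expand x y t₂
  hbo : BoundaryOrder U₁ U₂ lt
  hbo' : BoundaryOrder U₁' U₂' lt'
  hL : ∀ z, 0 < L z
  hL' : ∀ z, 0 < L' z
  hco : ∀ a b, Boundary U₁ U₂ a → Boundary U₁ U₂ b →
    (lt a b ↔ prefixLen U₁ U₂ L a < prefixLen U₁ U₂ L b)
  hco' : ∀ a b, Boundary U₁' U₂' a → Boundary U₁' U₂' b →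
    (lt' a b ↔ prefixLen U₁' U₂' L' a < prefixLen U₁' U₂' L' b)
  hyltx : L y < L x
  hmatch : ∀ a b, Bpminus U₁ U₂ x a → Bpminus U₁ U₂ x b →
    (lt' a b ↔ lt (nu U₁' U₂' x a) (nu U₁' U₂' x b))

lemma word_fst (W₁ W₂ : List X) : word W₁ W₂ 1 = W₁ := if_pos rfl

lemma word_snd (W₁ W₂ : List X) : word W₁ W₂ 2 = W₂ := if_neg (by omega)

variable {U₁ U₂ U₁' U₂' t₁ t₂ : List X} {lt lt' : BRel} {x y : X} {L L' : X → ℕ}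

lemma Ctx.mu_one (C : Ctx U₁ U₂ U₁' U₂' t₁ t₂ lt lt' x y L L') (k : ℕ) :
    mu U₁ U₂ x (1, k+1) = (1, 1 + mf x t₁ k) := by
  have h : ((word U₁ U₂ (1, k+1).1).take (k+1)).count x = (t₁.take k).count x + 1 := by
    show ((word U₁ U₂ 1).take (k+1)).count x = _
    rw [word_fst, C.e1, List.take_succ_cons, List.count_cons_self]
  show (1, (k+1) + ((word U₁ U₂ (1, k+1).1).take (k+1)).count x - 1) = _
  rw [h]
  unfold mf
  norm_num
  omega

lemma Ctx.mu_two (C : Ctx U₁ U₂ U₁' U₂' t₁ t₂ lt lt' x y L L') (k : ℕ) :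
    mu U₁ U₂ x (2, k+1) = (2, mf x t₂ k) := by
  have h : ((word U₁ U₂ (2, k+1).1).take (k+1)).count x = (t₂.take k).count x := by
    show ((word U₁ U₂ 2).take (k+1)).count x = _
    rw [word_snd, C.e2, List.take_succ_cons, List.count_cons_of_ne C.hyx]
  show (2, (k+1) + ((word U₁ U₂ (2, k+1).1).take (k+1)).count x - 1) = _
  rw [h]
  unfold mf
  norm_num

lemma Ctx.len_one (C : Ctx U₁ U₂ U₁' U₂' t₁ t₂ lt lt' x y L L') :
    U₁.length = t₁.length + 1 := by rw [C.e1]; rfl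

lemma Ctx.len_two (C : Ctx U₁ U₂ U₁' U₂' t₁ t₂ lt lt' x y L L') :
    U₂.length = t₂.length + 1 := by rw [C.e2]; rfl

lemma Ctx.len_one' (C : Ctx U₁ U₂ U₁' U₂' t₁ t₂ lt lt' x y L L') :
    U₁'.length = (expand x y t₁).length + 1 := by rw [C.e1']; rfl

lemma Ctx.len_two' (C : Ctx U₁ U₂ U₁' U₂' t₁ t₂ lt lt' x y L L') :
    U₂'.length = (expand x y t₂).length := by rw [C.e2']

lemma Ctx.letter_one (C : Ctx U₁ U₂ U₁' U₂' t₁ t₂ lt lt' x y L L') (k : ℕ) :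
    letter U₁ U₂ (1, k+2) = t₁[k]? := by
  show (word U₁ U₂ 1)[k+2-1]? = _
  rw [word_fst, C.e1]
  show (x :: t₁)[k+1]? = _
  rw [List.getElem?_cons_succ]

lemma Ctx.letter_two (C : Ctx U₁ U₂ U₁' U₂' t₁ t₂ lt lt' x y L L') (k : ℕ) :
    letter U₁ U₂ (2, k+2) = t₂[k]? := by
  show (word U₁ U₂ 2)[k+2-1]? = _
  rw [word_snd, C.e2]
  show (y :: t₂)[k+1]? = _
  rw [List.getElem?_cons_succ]

lemma Ctx.letter_one_one (C : Ctx U₁ U₂ U₁' U₂' t₁ t₂ lt lt' x y L L') :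
    letter U₁ U₂ (1, 1) = some x := by
  show (word U₁ U₂ 1)[0]? = _
  rw [word_fst, C.e1, List.getElem?_cons_zero]

lemma Ctx.letter_two_one (C : Ctx U₁ U₂ U₁' U₂' t₁ t₂ lt lt' x y L L') :
    letter U₁ U₂ (2, 1) = some y := by
  show (word U₁ U₂ 2)[0]? = _
  rw [word_snd, C.e2, List.getElem?_cons_zero]

lemma Ctx.letter_one' (C : Ctx U₁ U₂ U₁' U₂' t₁ t₂ lt lt' x y L L') (k : ℕ) :
    letter U₁' U₂' (1, k+2) = (expand x y t₁)[k]? := by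
  show (word U₁' U₂' 1)[k+2-1]? = _
  rw [word_fst, C.e1']
  show (x :: expand x y t₁)[k+1]? = _
  rw [List.getElem?_cons_succ]

lemma Ctx.letter_two' (C : Ctx U₁ U₂ U₁' U₂' t₁ t₂ lt lt' x y L L') (k : ℕ) :
    letter U₁' U₂' (2, k+1) = (expand x y t₂)[k]? := by
  show (word U₁' U₂' 2)[k+1-1]? = _
  rw [word_snd, C.e2']
  rfl

lemma Ctx.letter_one_one' (C : Ctx U₁ U₂ U₁' U₂' t₁ t₂ lt lt' x y L L') :
    letter U₁' U₂' (1, 1) = some x := by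
  show (word U₁' U₂' 1)[0]? = _
  rw [word_fst, C.e1', List.getElem?_cons_zero]

lemma Ctx.boundary_one_one (C : Ctx U₁ U₂ U₁' U₂' t₁ t₂ lt lt' x y L L') :
    Boundary U₁ U₂ (1, 1) := by
  refine ⟨Or.inl rfl, le_refl 1, ?_⟩
  rw [word_fst, C.len_one]; omega

lemma Ctx.boundary_two_one (C : Ctx U₁ U₂ U₁' U₂' t₁ t₂ lt lt' x y L L') :
    Boundary U₁ U₂ (2, 1) := by
  refine ⟨Or.inr rfl, le_refl 1, ?_⟩
  rw [word_snd, C.len_two]; omega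

end Main

section Main2
variable {X : Type*} [DecidableEq X]
variable {U₁ U₂ U₁' U₂' t₁ t₂ : List X} {lt lt' : BRel} {x y : X} {L L' : X → ℕ}

lemma Ctx.dmem_elim (C : Ctx U₁ U₂ U₁' U₂' t₁ t₂ lt lt' x y L L') {d : ℕ × ℕ}
    (hd : Dmem U₁ U₂ x d) :
    (∃ k, d = (1, k+2) ∧ t₁[k]? = some x ∧ k + 1 ≤ t₁.length) ∨
    (∃ k, d = (2, k+2) ∧ t₂[k]? = some x ∧ k + 1 ≤ t₂.length) := by
  obtain ⟨⟨hi, hj1, hj2⟩, hlet, hne⟩ := hd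
  obtain ⟨i, j⟩ := d
  simp only at hi hj1 hj2 hne ⊢
  rcases hi with rfl | rfl
  · rcases Nat.exists_eq_add_of_le hj1 with ⟨k, hk⟩
    rcases Nat.eq_zero_or_pos k with rfl | hpos
    · exfalso; apply hne; rw [hk]
    · left
      refine ⟨k - 1, by rw [hk]; congr 1; omega, ?_, ?_⟩
      · rw [← C.letter_one (k-1)]
        rw [show k - 1 + 2 = j by omega]
        exact hlet
      · rw [word_fst, C.len_one] at hj2; omega
  · rcases Nat.exists_eq_add_of_le hj1 with ⟨k, hk⟩
    rcases Nat.eq_zero_or_pos k with rfl | hpos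
    · exfalso
      rw [hk] at hlet
      rw [C.letter_two_one] at hlet
      exact C.hyx (Option.some.injEq .. ▸ hlet ▸ rfl)
    · right
      refine ⟨k - 1, by rw [hk]; congr 1; omega, ?_, ?_⟩
      · rw [← C.letter_two (k-1)]
        rw [show k - 1 + 2 = j by omega]
        exact hlet
      · rw [word_snd, C.len_two] at hj2; omega

lemma Ctx.boundary_mu (C : Ctx U₁ U₂ U₁' U₂' t₁ t₂ lt lt' x y L L') {b : ℕ × ℕ}
    (hb : Bminus U₁ U₂ b) : Boundary U₁' U₂' (mu U₁ U₂ x b) := by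
  obtain ⟨⟨hi, hj1, hj2⟩, hne⟩ := hb
  obtain ⟨i, j⟩ := b
  simp only at hi hj1 hj2 hne
  obtain ⟨k, rfl⟩ : ∃ k, j = k + 1 := ⟨j - 1, by omega⟩
  rcases hi with rfl | rfl
  · rw [C.mu_one]
    refine ⟨Or.inl rfl, by omega, ?_⟩
    rw [word_fst, C.len_one']
    rw [word_fst, C.len_one] at hj2
    have := mf_le_length (x := x) (y := y) t₁ (j := k) (by omega)
    omega
  · rw [C.mu_two]
    have hk1 : 1 ≤ k := by
      rcases Nat.eq_zero_or_pos k with rfl | h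
      · exact absurd rfl hne
      · omega
    refine ⟨Or.inr rfl, ?_, ?_⟩
    · have h0 : mf x t₂ 0 < mf x t₂ k := mf_strictMono t₂ (by omega)
      rw [mf_zero] at h0; omega
    · rw [word_snd, C.len_two']
      rw [word_snd, C.len_two] at hj2
      exact mf_le_length t₂ (by omega)

lemma Ctx.letter_mu (C : Ctx U₁ U₂ U₁' U₂' t₁ t₂ lt lt' x y L L') {b : ℕ × ℕ}
    (hb : Bminus U₁ U₂ b) :
    letter U₁' U₂' (mu U₁ U₂ x b) = letter U₁ U₂ b := by
  obtain ⟨⟨hi, hj1, hj2⟩, hne⟩ := hb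
  obtain ⟨i, j⟩ := b
  simp only at hi hj1 hj2 hne
  rcases hi with rfl | rfl
  · rw [word_fst, C.len_one] at hj2
    obtain ⟨k, rfl⟩ : ∃ k, j = k + 1 := ⟨j - 1, by omega⟩
    rcases Nat.eq_zero_or_pos k with rfl | hpos
    · rw [C.mu_one, mf_zero, C.letter_one_one, C.letter_one_one']
    · obtain ⟨k', rfl⟩ : ∃ k', k = k' + 1 := ⟨k - 1, by omega⟩
      have hk' : k' < t₁.length := by omega
      rw [C.mu_one, C.letter_one (k := k'), mf_succ t₁ hk',
        List.getElem?_eq_getElem hk']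
      by_cases hx : t₁[k'] = x
      · rw [if_pos hx]
        rw [show 1 + (mf x t₁ k' + 2) = (mf x t₁ k' + 1) + 2 by omega, C.letter_one']
        have := getElem?_expand_letter (x := x) (y := y) t₁ hk'
        rw [if_pos hx] at this
        exact this
      · rw [if_neg hx]
        rw [show 1 + (mf x t₁ k' + 1) = (mf x t₁ k') + 2 by omega, C.letter_one']
        have := getElem?_expand_letter (x := x) (y := y) t₁ hk'
        rw [if_neg hx, Nat.add_zero] at this
        exact this
  · rw [word_snd, C.len_two] at hj2
    obtain ⟨k, rfl⟩ : ∃ k, j = k + 1 := ⟨j - 1, by omega⟩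
    have hk1 : 1 ≤ k := by
      rcases Nat.eq_zero_or_pos k with rfl | h
      · exact absurd rfl hne
      · omega
    obtain ⟨k', rfl⟩ : ∃ k', k = k' + 1 := ⟨k - 1, by omega⟩
    have hk' : k' < t₂.length := by omega
    rw [C.mu_two, C.letter_two (k := k'), mf_succ t₂ hk',
      List.getElem?_eq_getElem hk']
    by_cases hx : t₂[k'] = x
    · rw [if_pos hx]
      rw [show mf x t₂ k' + 2 = (mf x t₂ k' + 1) + 1 by omega, C.letter_two']
      have := getElem?_expand_letter (x := x) (y := y) t₂ hk'
      rw [if_pos hx] at this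
      exact this
    · rw [if_neg hx]
      rw [show mf x t₂ k' + 1 = (mf x t₂ k') + 1 by omega, C.letter_two']
      have := getElem?_expand_letter (x := x) (y := y) t₂ hk'
      rw [if_neg hx, Nat.add_zero] at this
      exact this

lemma Ctx.nu_mu (C : Ctx U₁ U₂ U₁' U₂' t₁ t₂ lt lt' x y L L') {b : ℕ × ℕ}
    (hb : Bminus U₁ U₂ b) : nu U₁' U₂' x (mu U₁ U₂ x b) = b := by
  obtain ⟨⟨hi, hj1, hj2⟩, hne⟩ := hb
  obtain ⟨i, j⟩ := b
  simp only at hi hj1 hj2 hne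
  obtain ⟨k, rfl⟩ : ∃ k, j = k + 1 := ⟨j - 1, by omega⟩
  rcases hi with rfl | rfl
  · rw [word_fst, C.len_one] at hj2
    rw [C.mu_one]
    show (1, 1 + mf x t₁ k - ((word U₁' U₂' 1).take (1 + mf x t₁ k)).count x + 1) = _
    rw [word_fst, C.e1']
    rw [show 1 + mf x t₁ k = mf x t₁ k + 1 by omega, List.take_succ_cons,
      List.count_cons_self, expand_take t₁ (by omega), count_expand C.hyx]
    have hc : (t₁.take k).count x ≤ mf x t₁ k := by unfold mf; omega
    simp only [Prod.mk.injEq, true_and]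
    unfold mf
    omega
  · rw [word_snd, C.len_two] at hj2
    rw [C.mu_two]
    show (2, mf x t₂ k - ((word U₁' U₂' 2).take (mf x t₂ k)).count x + 1) = _
    rw [word_snd, C.e2', expand_take t₂ (by omega), count_expand C.hyx]
    simp only [Prod.mk.injEq, true_and]
    unfold mf
    omega

lemma Ctx.mu_inj (C : Ctx U₁ U₂ U₁' U₂' t₁ t₂ lt lt' x y L L') {b c : ℕ × ℕ}
    (hb : Bminus U₁ U₂ b) (hc : Bminus U₁ U₂ c)
    (h : mu U₁ U₂ x b = mu U₁ U₂ x c) : b = c := by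
  rw [← C.nu_mu hb, ← C.nu_mu hc, h]

lemma Ctx.plusb_one (C : Ctx U₁ U₂ U₁' U₂' t₁ t₂ lt lt' x y L L') {k : ℕ}
    (hk : t₁[k]? = some x) :
    plusb U₁ U₂ x (1, k+2) = (1, mf x t₁ k + 2) := by
  obtain ⟨hkl, hx⟩ := List.getElem?_eq_some_iff.mp hk
  show (1, (k+2) + ((word U₁ U₂ 1).take (k+2)).count x - 2) = _
  rw [word_fst, C.e1, List.take_succ_cons, List.count_cons_self]
  have h2 : (t₁.take (k+1)).count x = (t₁.take k).count x + 1 := by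
    rw [List.take_succ, List.getElem?_eq_getElem hkl, Option.toList_some,
      List.count_append, List.count_singleton', if_pos hx]
  rw [h2]
  simp only [Prod.mk.injEq, true_and]
  unfold mf
  omega

lemma Ctx.plusb_two (C : Ctx U₁ U₂ U₁' U₂' t₁ t₂ lt lt' x y L L') {k : ℕ}
    (hk : t₂[k]? = some x) :
    plusb U₁ U₂ x (2, k+2) = (2, mf x t₂ k + 1) := by
  obtain ⟨hkl, hx⟩ := List.getElem?_eq_some_iff.mp hk
  show (2, (k+2) + ((word U₁ U₂ 2).take (k+2)).count x - 2) = _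
  rw [word_snd, C.e2, List.take_succ_cons, List.count_cons_of_ne C.hyx]
  have h2 : (t₂.take (k+1)).count x = (t₂.take k).count x + 1 := by
    rw [List.take_succ, List.getElem?_eq_getElem hkl, Option.toList_some,
      List.count_append, List.count_singleton', if_pos hx]
  rw [h2]
  simp only [Prod.mk.injEq, true_and]
  unfold mf
  omega

end Main2

section Main3
variable {X : Type*} [DecidableEq X]
variable {U₁ U₂ U₁' U₂' t₁ t₂ : List X} {lt lt' : BRel} {x y : X} {L L' : X → ℕ}

lemma Ctx.dmem_bminus (C : Ctx U₁ U₂ U₁' U₂' t₁ t₂ lt lt' x y L L') {d : ℕ × ℕ}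
    (hd : Dmem U₁ U₂ x d) : Bminus U₁ U₂ d := by
  refine ⟨hd.1, ?_⟩
  intro h
  have h2 := hd.2.1
  rw [h, C.letter_two_one] at h2
  exact C.hyx (by injection h2)

lemma Ctx.boundary_plusb (C : Ctx U₁ U₂ U₁' U₂' t₁ t₂ lt lt' x y L L') {d : ℕ × ℕ}
    (hd : Dmem U₁ U₂ x d) : Boundary U₁' U₂' (plusb U₁ U₂ x d) := by
  rcases C.dmem_elim hd with ⟨k, rfl, hk, hkl⟩ | ⟨k, rfl, hk, hkl⟩
  · obtain ⟨hkl', hx⟩ := List.getElem?_eq_some_iff.mp hk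
    rw [C.plusb_one hk]
    refine ⟨Or.inl rfl, by omega, ?_⟩
    rw [word_fst, C.len_one']
    have h1 : mf x t₁ (k+1) = mf x t₁ k + 2 := by rw [mf_succ t₁ hkl', if_pos hx]
    have h2 := mf_le_length (x := x) (y := y) t₁ (j := k+1) (by omega)
    omega
  · obtain ⟨hkl', hx⟩ := List.getElem?_eq_some_iff.mp hk
    rw [C.plusb_two hk]
    refine ⟨Or.inr rfl, by omega, ?_⟩
    rw [word_snd, C.len_two']
    have h1 : mf x t₂ (k+1) = mf x t₂ k + 2 := by rw [mf_succ t₂ hkl', if_pos hx]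
    have h2 := mf_le_length (x := x) (y := y) t₂ (j := k+1) (by omega)
    omega

lemma Ctx.letter_plusb (C : Ctx U₁ U₂ U₁' U₂' t₁ t₂ lt lt' x y L L') {d : ℕ × ℕ}
    (hd : Dmem U₁ U₂ x d) : letter U₁' U₂' (plusb U₁ U₂ x d) = some y := by
  rcases C.dmem_elim hd with ⟨k, rfl, hk, hkl⟩ | ⟨k, rfl, hk, hkl⟩
  · obtain ⟨hkl', hx⟩ := List.getElem?_eq_some_iff.mp hk
    rw [C.plusb_one hk, C.letter_one']
    exact getElem?_expand_y t₁ hkl' hx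
  · obtain ⟨hkl', hx⟩ := List.getElem?_eq_some_iff.mp hk
    rw [C.plusb_two hk, C.letter_two']
    exact getElem?_expand_y t₂ hkl' hx

lemma Ctx.not_bpminus_plusb (C : Ctx U₁ U₂ U₁' U₂' t₁ t₂ lt lt' x y L L') {d : ℕ × ℕ}
    (hd : Dmem U₁ U₂ x d) : ¬ Bpminus U₁ U₂ x (plusb U₁ U₂ x d) := by
  rintro ⟨b, hb, hmu⟩
  obtain ⟨⟨hi, hj1, hj2⟩, hne⟩ := hb
  obtain ⟨i, j⟩ := b
  simp only at hi hj1 hj2 hne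
  obtain ⟨k', rfl⟩ : ∃ k', j = k' + 1 := ⟨j - 1, by omega⟩
  rcases C.dmem_elim hd with ⟨k, rfl, hk, hkl⟩ | ⟨k, rfl, hk, hkl⟩ <;>
    obtain ⟨hkl', hx⟩ := List.getElem?_eq_some_iff.mp hk
  · rw [C.plusb_one hk] at hmu
    rcases hi with rfl | rfl
    · rw [C.mu_one] at hmu
      have h : 1 + mf x t₁ k' = mf x t₁ k + 2 := congrArg Prod.snd hmu
      have h1 : mf x t₁ (k+1) = mf x t₁ k + 2 := by rw [mf_succ t₁ hkl', if_pos hx]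
      rcases le_or_gt k' k with hle | hlt
      · have := (mf_strictMono (x := x) t₁).monotone hle; omega
      · have := (mf_strictMono (x := x) t₁).monotone (show k + 1 ≤ k' by omega); omega
    · rw [C.mu_two] at hmu
      exact absurd (congrArg Prod.fst hmu) (by simp)
  · rw [C.plusb_two hk] at hmu
    rcases hi with rfl | rfl
    · rw [C.mu_one] at hmu
      exact absurd (congrArg Prod.fst hmu) (by simp)
    · rw [C.mu_two] at hmu
      have h : mf x t₂ k' = mf x t₂ k + 1 := congrArg Prod.snd hmu
      have h1 : mf x t₂ (k+1) = mf x t₂ k + 2 := by rw [mf_succ t₂ hkl', if_pos hx]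
      rcases le_or_gt k' k with hle | hlt
      · have := (mf_strictMono (x := x) t₂).monotone hle; omega
      · have := (mf_strictMono (x := x) t₂).monotone (show k + 1 ≤ k' by omega); omega

lemma Ctx.plusb_inj (C : Ctx U₁ U₂ U₁' U₂' t₁ t₂ lt lt' x y L L') {d d' : ℕ × ℕ}
    (hd : Dmem U₁ U₂ x d) (hd' : Dmem U₁ U₂ x d')
    (h : plusb U₁ U₂ x d = plusb U₁ U₂ x d') : d = d' := by
  rcases C.dmem_elim hd with ⟨k, rfl, hk, hkl⟩ | ⟨k, rfl, hk, hkl⟩ <;>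
    rcases C.dmem_elim hd' with ⟨k', rfl, hk', hkl'⟩ | ⟨k', rfl, hk', hkl'⟩
  · rw [C.plusb_one hk, C.plusb_one hk'] at h
    have h2 : mf x t₁ k + 2 = mf x t₁ k' + 2 := congrArg Prod.snd h
    have := (mf_strictMono (x := x) t₁).injective (show mf x t₁ k = mf x t₁ k' by omega)
    rw [this]
  · rw [C.plusb_one hk, C.plusb_two hk'] at h
    exact absurd (congrArg Prod.fst h) (by simp)
  · rw [C.plusb_two hk, C.plusb_one hk'] at h
    exact absurd (congrArg Prod.fst h) (by simp)
  · rw [C.plusb_two hk, C.plusb_two hk'] at h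
    have h2 : mf x t₂ k + 1 = mf x t₂ k' + 1 := congrArg Prod.snd h
    have := (mf_strictMono (x := x) t₂).injective (show mf x t₂ k = mf x t₂ k' by omega)
    rw [this]

lemma Ctx.mu_one_one (C : Ctx U₁ U₂ U₁' U₂' t₁ t₂ lt lt' x y L L') :
    mu U₁ U₂ x (1, 1) = (1, 1) := by
  rw [show ((1:ℕ),(1:ℕ)) = (1, 0 + 1) from rfl, C.mu_one, mf_zero]

lemma Ctx.mu_two_one (C : Ctx U₁ U₂ U₁' U₂' t₁ t₂ lt lt' x y L L') :
    mu U₁ U₂ x (2, 1) = (2, 0) := by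
  rw [show ((2:ℕ),(1:ℕ)) = (2, 0 + 1) from rfl, C.mu_two, mf_zero]

lemma Ctx.classify (C : Ctx U₁ U₂ U₁' U₂' t₁ t₂ lt lt' x y L L') {b' : ℕ × ℕ}
    (hb' : Boundary U₁' U₂' b') :
    (∃ b, Bminus U₁ U₂ b ∧ mu U₁ U₂ x b = b') ∨
    (∃ d, Dmem U₁ U₂ x d ∧ plusb U₁ U₂ x d = b') := by
  obtain ⟨hi, hn1, hn2⟩ := hb'
  obtain ⟨i, n⟩ := b'
  simp only at hi hn1 hn2
  rcases hi with rfl | rfl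
  · rw [word_fst, C.len_one'] at hn2
    rcases Nat.eq_or_lt_of_le hn1 with h1 | h1
    · left
      exact ⟨(1,1), ⟨C.boundary_one_one, by decide⟩, by rw [C.mu_one_one, ← h1]⟩
    · obtain ⟨k, rfl⟩ : ∃ k, n = k + 2 := ⟨n - 2, by omega⟩
      obtain ⟨j, hj, hcl⟩ := expand_classify (x := x) (y := y) t₁
        (k := k + 1) (by omega) (by omega)
      rcases hcl with hcl | ⟨hjx, hcl⟩
      · left
        refine ⟨(1, j+2), ⟨⟨Or.inl rfl, by omega, ?_⟩, by simp⟩, ?_⟩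
        · rw [word_fst, C.len_one]; omega
        · rw [show ((1:ℕ), j+2) = (1, (j+1)+1) from rfl, C.mu_one, ← hcl]
          simp only [Prod.mk.injEq, true_and]
          omega
      · right
        refine ⟨(1, j+2), ⟨⟨Or.inl rfl, by omega, by rw [word_fst, C.len_one]; omega⟩,
          by rw [C.letter_one]; exact hjx, by simp⟩, ?_⟩
        rw [C.plusb_one hjx]
        have hst : mf x t₁ (j+1) = mf x t₁ j + 2 := by
          rw [mf_succ t₁ hj, if_pos (List.getElem?_eq_some_iff.mp hjx).2]
        simp only [Prod.mk.injEq, true_and]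
        omega
  · rw [word_snd, C.len_two'] at hn2
    obtain ⟨j, hj, hcl⟩ := expand_classify (x := x) (y := y) t₂ (k := n) hn1 hn2
    rcases hcl with hcl | ⟨hjx, hcl⟩
    · left
      refine ⟨(2, j+2), ⟨⟨Or.inr rfl, by omega, ?_⟩, by simp⟩, ?_⟩
      · rw [word_snd, C.len_two]; omega
      · rw [show ((2:ℕ), j+2) = (2, (j+1)+1) from rfl, C.mu_two, ← hcl]
    · right
      refine ⟨(2, j+2), ⟨⟨Or.inr rfl, by omega, by rw [word_snd, C.len_two]; omega⟩,
        by rw [C.letter_two]; exact hjx, by simp⟩, ?_⟩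
      rw [C.plusb_two hjx]
      have hst : mf x t₂ (j+1) = mf x t₂ j + 2 := by
        rw [mf_succ t₂ hj, if_pos (List.getElem?_eq_some_iff.mp hjx).2]
      simp only [Prod.mk.injEq, true_and]
      omega

/-- index identity: left neighbour of a `μ`-boundary whose letter is not `x`. -/
lemma Ctx.mu_step_ne (C : Ctx U₁ U₂ U₁' U₂' t₁ t₂ lt lt' x y L L') {i k : ℕ}
    (hi : i = 1 ∨ i = 2) (hk : k + 2 ≤ (word U₁ U₂ i).length)
    (hlet : letter U₁ U₂ (i, k+2) ≠ some x) :
    (mu U₁ U₂ x (i, k+2)).2 = (mu U₁ U₂ x (i, k+1)).2 + 1 := by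
  rcases hi with rfl | rfl
  · rw [word_fst, C.len_one] at hk
    rw [C.letter_one] at hlet
    have hkl : k < t₁.length := by omega
    have hx : ¬ t₁[k] = x := fun h => hlet (by rw [List.getElem?_eq_getElem hkl, h])
    rw [C.mu_one, C.mu_one, mf_succ t₁ hkl, if_neg hx]
    all_goals dsimp only
    all_goals omega
  · rw [word_snd, C.len_two] at hk
    rw [C.letter_two] at hlet
    have hkl : k < t₂.length := by omega
    have hx : ¬ t₂[k] = x := fun h => hlet (by rw [List.getElem?_eq_getElem hkl, h])
    rw [C.mu_two, C.mu_two, mf_succ t₂ hkl, if_neg hx]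
    all_goals dsimp only
    all_goals omega

/-- index identities around an occurrence of `x`. -/
lemma Ctx.mu_step_eq (C : Ctx U₁ U₂ U₁' U₂' t₁ t₂ lt lt' x y L L') {d : ℕ × ℕ}
    (hd : Dmem U₁ U₂ x d) :
    (plusb U₁ U₂ x d).2 + 1 = (mu U₁ U₂ x d).2 ∧
    (mu U₁ U₂ x (d.1, d.2 - 1)).2 + 1 = (plusb U₁ U₂ x d).2 := by
  rcases C.dmem_elim hd with ⟨k, rfl, hk, hkl⟩ | ⟨k, rfl, hk, hkl⟩ <;>
    obtain ⟨hkl', hx⟩ := List.getElem?_eq_some_iff.mp hk <;> dsimp only <;>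
    constructor
  · rw [C.plusb_one hk, show ((1:ℕ), k+2) = (1, (k+1)+1) from rfl, C.mu_one,
      mf_succ t₁ hkl', if_pos hx]
    all_goals dsimp only
    all_goals omega
  · rw [C.plusb_one hk, show k+2-1 = k+1 from rfl, C.mu_one]
    all_goals dsimp only
    all_goals omega
  · rw [C.plusb_two hk, show ((2:ℕ), k+2) = (2, (k+1)+1) from rfl, C.mu_two,
      mf_succ t₂ hkl', if_pos hx]
    all_goals dsimp only
    all_goals omega
  · rw [C.plusb_two hk, show k+2-1 = k+1 from rfl, C.mu_two]
    all_goals dsimp only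
    all_goals omega

end Main3

section Main4
variable {X : Type*} [DecidableEq X]
variable {U₁ U₂ U₁' U₂' t₁ t₂ : List X} {lt lt' : BRel} {x y : X} {L L' : X → ℕ}

lemma Ctx.P_one_one (C : Ctx U₁ U₂ U₁' U₂' t₁ t₂ lt lt' x y L L') :
    prefixLen U₁ U₂ L (1, 1) = L x := by
  show (((word U₁ U₂ 1).take 1).map L).sum = L x
  rw [word_fst, C.e1]
  simp

lemma Ctx.P_two_one (C : Ctx U₁ U₂ U₁' U₂' t₁ t₂ lt lt' x y L L') :
    prefixLen U₁ U₂ L (2, 1) = L y := by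
  show (((word U₁ U₂ 2).take 1).map L).sum = L y
  rw [word_snd, C.e2]
  simp

lemma Ctx.P_gt_Ly (C : Ctx U₁ U₂ U₁' U₂' t₁ t₂ lt lt' x y L L') {b : ℕ × ℕ}
    (hb : Boundary U₁ U₂ b) (hne : b ≠ (2,1)) : L y < prefixLen U₁ U₂ L b := by
  obtain ⟨hi, hj1, hj2⟩ := hb
  obtain ⟨i, j⟩ := b
  simp only at hi hj1 hj2 hne
  rcases hi with rfl | rfl
  · have h1 : prefixLen U₁ U₂ L (1,1) ≤ prefixLen U₁ U₂ L (1,j) := prefixLen_le C.hL hj1 hj2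
    rw [C.P_one_one] at h1
    have := C.hyltx
    omega
  · have hj : 2 ≤ j := by
      rcases Nat.eq_or_lt_of_le hj1 with h | h
      · exact absurd (by rw [← h]) hne
      · omega
    have h1 : prefixLen U₁ U₂ L (2,1) < prefixLen U₁ U₂ L (2,j) := prefixLen_lt C.hL (by omega) hj2
    rw [C.P_two_one] at h1
    exact h1

lemma Ctx.P_gt_Lx (C : Ctx U₁ U₂ U₁' U₂' t₁ t₂ lt lt' x y L L') {d : ℕ × ℕ}
    (hd : Dmem U₁ U₂ x d) : L x < prefixLen U₁ U₂ L d := by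
  have hb := hd.1
  rcases C.dmem_elim hd with ⟨k, rfl, hk, hkl⟩ | ⟨k, rfl, hk, hkl⟩
  · have h1 : prefixLen U₁ U₂ L (1,1) < prefixLen U₁ U₂ L (1,k+2) :=
      prefixLen_lt C.hL (by omega) hb.2.2
    rw [C.P_one_one] at h1
    exact h1
  · have hlet : letter U₁ U₂ (2, (k+1)+1) = some x := hd.2.1
    have h2 : prefixLen U₁ U₂ L (2, k+2) = prefixLen U₁ U₂ L (2, k+1) + L x :=
      prefixLen_succ L hlet
    have hbb : k + 2 ≤ (word U₁ U₂ 2).length := hb.2.2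
    have h1 : prefixLen U₁ U₂ L (2,1) ≤ prefixLen U₁ U₂ L (2,k+1) :=
      prefixLen_le C.hL (by omega) (by omega)
    rw [C.P_two_one] at h1
    have := C.hL y
    have := C.hyltx
    omega

lemma Ctx.T1 (C : Ctx U₁ U₂ U₁' U₂' t₁ t₂ lt lt' x y L L') {b c : ℕ × ℕ}
    (hb : Bminus U₁ U₂ b) (hc : Bminus U₁ U₂ c) :
    prefixLen U₁ U₂ L b < prefixLen U₁ U₂ L c ↔
      prefixLen U₁' U₂' L' (mu U₁ U₂ x b) < prefixLen U₁' U₂' L' (mu U₁ U₂ x c) := by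
  have h1 := C.hco b c hb.1 hc.1
  have h2 := C.hco' (mu U₁ U₂ x b) (mu U₁ U₂ x c) (C.boundary_mu hb) (C.boundary_mu hc)
  have h3 := C.hmatch (mu U₁ U₂ x b) (mu U₁ U₂ x c) ⟨b, hb, rfl⟩ ⟨c, hc, rfl⟩
  rw [C.nu_mu hb, C.nu_mu hc] at h3
  exact h1.symm.trans (h3.symm.trans h2)

lemma Ctx.T1eq (C : Ctx U₁ U₂ U₁' U₂' t₁ t₂ lt lt' x y L L') {b c : ℕ × ℕ}
    (hb : Bminus U₁ U₂ b) (hc : Bminus U₁ U₂ c) :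
    prefixLen U₁ U₂ L b = prefixLen U₁ U₂ L c ↔
      prefixLen U₁' U₂' L' (mu U₁ U₂ x b) = prefixLen U₁' U₂' L' (mu U₁ U₂ x c) := by
  have h1 := C.T1 hb hc
  have h2 := C.T1 hc hb
  constructor
  · intro h
    by_contra hne
    rcases Nat.lt_or_ge (prefixLen U₁' U₂' L' (mu U₁ U₂ x b))
      (prefixLen U₁' U₂' L' (mu U₁ U₂ x c)) with hh | hh
    · have := h1.mpr hh; omega
    · have hh2 : prefixLen U₁' U₂' L' (mu U₁ U₂ x c) <
        prefixLen U₁' U₂' L' (mu U₁ U₂ x b) := by omega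
      have := h2.mpr hh2; omega
  · intro h
    by_contra hne
    rcases Nat.lt_or_ge (prefixLen U₁ U₂ L b) (prefixLen U₁ U₂ L c) with hh | hh
    · have := h1.mp hh; omega
    · have hh2 : prefixLen U₁ U₂ L c < prefixLen U₁ U₂ L b := by omega
      have := h2.mp hh2; omega

lemma Ctx.mirror_build (C : Ctx U₁ U₂ U₁' U₂' t₁ t₂ lt lt' x y L L') {c d : ℕ × ℕ}
    (hc : Boundary U₁ U₂ c) (hd : Boundary U₁ U₂ d)
    (hlet : letter U₁ U₂ c = letter U₁ U₂ d)
    (hne : prefixLen U₁ U₂ L c ≠ prefixLen U₁ U₂ L d) : Mirrors U₁ U₂ lt c d := by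
  refine ⟨hc, hd, hlet, Or.inl ?_⟩
  rintro ⟨h1, h2⟩
  rw [C.hco c d hc hd] at h1
  rw [C.hco d c hd hc] at h2
  omega

lemma Ctx.q_lt_of_lt' (C : Ctx U₁ U₂ U₁' U₂' t₁ t₂ lt lt' x y L L') {b' c' : ℕ × ℕ}
    (hb' : Boundary U₁' U₂' b') (hc' : Boundary U₁' U₂' c')
    (h : lt' (b'.1, b'.2 - 1) c') :
    prefixLen U₁' U₂' L' (b'.1, b'.2 - 1) < prefixLen U₁' U₂' L' c' := by
  rcases Nat.eq_or_lt_of_le hb'.2.1 with h1 | h1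
  · rw [show b'.2 - 1 = 0 by omega, prefixLen_zero]
    exact boundary_pos C.hL' hc'
  · exact (C.hco' (b'.1, b'.2 - 1) c' (Boundary.pred hb' (by omega)) hc').mp h

lemma Ctx.cuts'_q (C : Ctx U₁ U₂ U₁' U₂' t₁ t₂ lt lt' x y L L') {b' c' : ℕ × ℕ}
    (h : Cuts U₁' U₂' lt' b' c') :
    prefixLen U₁' U₂' L' (b'.1, b'.2 - 1) < prefixLen U₁' U₂' L' c' ∧
    prefixLen U₁' U₂' L' (c'.1, c'.2 - 1) < prefixLen U₁' U₂' L' b' := by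
  obtain ⟨hb', hc', hne, h1, h2⟩ := h
  exact ⟨C.q_lt_of_lt' hb' hc' h1, C.q_lt_of_lt' hc' hb' h2⟩

lemma Ctx.cuts_build (C : Ctx U₁ U₂ U₁' U₂' t₁ t₂ lt lt' x y L L') {b c : ℕ × ℕ}
    (hb : Boundary U₁ U₂ b) (hc : Boundary U₁ U₂ c) (hne : b ≠ c)
    (h1 : prefixLen U₁ U₂ L (b.1, b.2 - 1) < prefixLen U₁ U₂ L c)
    (h2 : prefixLen U₁ U₂ L (c.1, c.2 - 1) < prefixLen U₁ U₂ L b) :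
    Cuts U₁ U₂ lt b c := by
  refine ⟨hb, hc, hne, ?_, ?_⟩
  · rcases Nat.eq_or_lt_of_le hb.2.1 with hh | hh
    · rw [show b.2 - 1 = 0 by omega]
      exact lt_zero C.hbo hc hb.1
    · exact (C.hco (b.1, b.2 - 1) c (Boundary.pred hb (by omega)) hc).mpr h1
  · rcases Nat.eq_or_lt_of_le hc.2.1 with hh | hh
    · rw [show c.2 - 1 = 0 by omega]
      exact lt_zero C.hbo hb hc.1
    · exact (C.hco (c.1, c.2 - 1) b (Boundary.pred hc (by omega)) hb).mpr h2

lemma Ctx.mirror'_forward (C : Ctx U₁ U₂ U₁' U₂' t₁ t₂ lt lt' x y L L') {c' d' : ℕ × ℕ}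
    (h : Mirrors U₁' U₂' lt' c' d') :
    letter U₁' U₂' c' = letter U₁' U₂' d' ∧
      prefixLen U₁' U₂' L' c' ≠ prefixLen U₁' U₂' L' d' := by
  obtain ⟨hc', hd', hlet, hdisj⟩ := h
  refine ⟨hlet, ?_⟩
  obtain ⟨z, hz⟩ := letter_eq_some hc'
  have hz' : letter U₁' U₂' d' = some z := by rw [← hlet, hz]
  obtain ⟨i, n⟩ := c'
  obtain ⟨i', n'⟩ := d'
  obtain ⟨k, rfl⟩ : ∃ k, n = k + 1 := ⟨n - 1, by have := hc'.2.1; omega⟩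
  obtain ⟨k', rfl⟩ : ∃ k', n' = k' + 1 := ⟨n' - 1, by have := hd'.2.1; omega⟩
  have hlen : k + 1 ≤ (word U₁' U₂' i).length := hc'.2.2
  have hlen' : k' + 1 ≤ (word U₁' U₂' i').length := hd'.2.2
  have hQ := prefixLen_succ (U₁ := U₁') (U₂ := U₂') L' hz
  have hQ' := prefixLen_succ (U₁ := U₁') (U₂ := U₂') L' hz'
  rcases hdisj with hd1 | hd2
  · have : lt' (i, k+1) (i', k'+1) ∨ lt' (i', k'+1) (i, k+1) := by
      by_contra hcon
      push_neg at hcon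
      exact hd1 ⟨hcon.1, hcon.2⟩
    rcases this with hlt | hlt
    · have := (C.hco' _ _ hc' hd').mp hlt; omega
    · have := (C.hco' _ _ hd' hc').mp hlt; omega
  · simp only [Nat.add_sub_cancel] at hd2
    rcases Nat.eq_zero_or_pos k with rfl | hk <;> rcases Nat.eq_zero_or_pos k' with rfl | hk'
    · -- both left neighbours are conventional zero boundaries
      exfalso
      by_cases hii : i = i'
      · subst hii
        have : lt' (i, 0) (i, 0) := by
          by_contra hcon
          exact hd2 ⟨hcon, hcon⟩
        exact C.hbo'.irrefl _ (EBoundary_zero hc'.1) this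
      · apply hd2
        rcases hc'.1 with rfl | rfl <;> rcases hd'.1 with rfl | rfl <;>
          first
            | exact absurd rfl hii
            | exact C.hbo'.bot
            | exact C.hbo'.bot.symm
    · have hpos : 0 < prefixLen U₁' U₂' L' (i', k') :=
        prefixLen_pos C.hL' hk' (by omega)
      rw [prefixLen_zero] at hQ
      omega
    · have hpos : 0 < prefixLen U₁' U₂' L' (i, k) :=
        prefixLen_pos C.hL' hk (by omega)
      rw [prefixLen_zero] at hQ'
      omega
    · have hbk : Boundary U₁' U₂' (i, k) := ⟨hc'.1, hk, Nat.le_of_succ_le hlen⟩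
      have hbk' : Boundary U₁' U₂' (i', k') := ⟨hd'.1, hk', Nat.le_of_succ_le hlen'⟩
      have : lt' (i, k) (i', k') ∨ lt' (i', k') (i, k) := by
        by_contra hcon
        push_neg at hcon
        exact hd2 ⟨hcon.1, hcon.2⟩
      rcases this with hlt | hlt
      · have := (C.hco' _ _ hbk hbk').mp hlt; omega
      · have := (C.hco' _ _ hbk' hbk).mp hlt; omega

lemma Ctx.Q_succ_x (C : Ctx U₁ U₂ U₁' U₂' t₁ t₂ lt lt' x y L L') {d : ℕ × ℕ}
    (hd : Dmem U₁ U₂ x d) :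
    prefixLen U₁' U₂' L' (mu U₁ U₂ x d) =
      prefixLen U₁' U₂' L' (plusb U₁ U₂ x d) + L' x := by
  have hlet : letter U₁' U₂' (mu U₁ U₂ x d) = some x :=
    (C.letter_mu (C.dmem_bminus hd)).trans hd.2.1
  have hstep := (C.mu_step_eq hd).1
  have hmu : mu U₁ U₂ x d = (d.1, (plusb U₁ U₂ x d).2 + 1) := by
    apply Prod.ext
    · rfl
    · omega
  rw [hmu] at hlet ⊢
  rw [prefixLen_succ L' hlet]
  rfl

lemma Ctx.Q_plusb_lt_mu (C : Ctx U₁ U₂ U₁' U₂' t₁ t₂ lt lt' x y L L') {d : ℕ × ℕ}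
    (hd : Dmem U₁ U₂ x d) :
    prefixLen U₁' U₂' L' (plusb U₁ U₂ x d) < prefixLen U₁' U₂' L' (mu U₁ U₂ x d) := by
  rw [C.Q_succ_x hd]
  have := C.hL' x
  omega

lemma Ctx.Q_pred_lt_plusb (C : Ctx U₁ U₂ U₁' U₂' t₁ t₂ lt lt' x y L L') {d : ℕ × ℕ}
    (hd : Dmem U₁ U₂ x d) :
    prefixLen U₁' U₂' L' (mu U₁ U₂ x (d.1, d.2 - 1)) <
      prefixLen U₁' U₂' L' (plusb U₁ U₂ x d) := by
  have hlet := C.letter_plusb hd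
  have hstep := (C.mu_step_eq hd).2
  have hpl : plusb U₁ U₂ x d = (d.1, (mu U₁ U₂ x (d.1, d.2 - 1)).2 + 1) := by
    apply Prod.ext
    · rfl
    · omega
  rw [hpl] at hlet ⊢
  rw [prefixLen_succ L' hlet]
  have := C.hL' y
  have hfst : (mu U₁ U₂ x (d.1, d.2 - 1)).1 = d.1 := rfl
  have : prefixLen U₁' U₂' L' (mu U₁ U₂ x (d.1, d.2 - 1)) =
      prefixLen U₁' U₂' L' (d.1, (mu U₁ U₂ x (d.1, d.2 - 1)).2) := by
    rw [show ((d.1, (mu U₁ U₂ x (d.1, d.2 - 1)).2) : ℕ × ℕ) =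
      mu U₁ U₂ x (d.1, d.2 - 1) from rfl]
  omega

end Main4

section Main5
variable {X : Type*} [DecidableEq X]

/-- `bb` is the old boundary corresponding to the new boundary `b'`. -/
def IsPre (U₁ U₂ : List X) (x : X) [DecidableEq X] (bb b' : ℕ × ℕ) : Prop :=
  (Bminus U₁ U₂ bb ∧ mu U₁ U₂ x bb = b') ∨ (Dmem U₁ U₂ x bb ∧ plusb U₁ U₂ x bb = b')

variable {U₁ U₂ U₁' U₂' t₁ t₂ : List X} {lt lt' : BRel} {x y : X} {L L' : X → ℕ}

lemma IsPre.boundary {bb b' : ℕ × ℕ} (h : IsPre U₁ U₂ x bb b') : Boundary U₁ U₂ bb := by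
  rcases h with ⟨h, _⟩ | ⟨h, _⟩
  exacts [h.1, h.1]

lemma IsPre.bminus (C : Ctx U₁ U₂ U₁' U₂' t₁ t₂ lt lt' x y L L') {bb b' : ℕ × ℕ}
    (h : IsPre U₁ U₂ x bb b') : Bminus U₁ U₂ bb := by
  rcases h with ⟨h, _⟩ | ⟨h, _⟩
  exacts [h, C.dmem_bminus h]

lemma IsPre.boundary' (C : Ctx U₁ U₂ U₁' U₂' t₁ t₂ lt lt' x y L L') {bb b' : ℕ × ℕ}
    (h : IsPre U₁ U₂ x bb b') : Boundary U₁' U₂' b' := by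
  rcases h with ⟨h, rfl⟩ | ⟨h, rfl⟩
  exacts [C.boundary_mu h, C.boundary_plusb h]

lemma Ctx.dmem_of_letter (C : Ctx U₁ U₂ U₁' U₂' t₁ t₂ lt lt' x y L L') {i k : ℕ}
    (hb : Boundary U₁ U₂ (i, k+2)) (hlx : letter U₁ U₂ (i, k+2) = some x) :
    Dmem U₁ U₂ x (i, k+2) :=
  ⟨hb, hlx, by intro hcon; injection hcon with h1 h2; omega⟩

lemma Ctx.Q_pred_le (C : Ctx U₁ U₂ U₁' U₂' t₁ t₂ lt lt' x y L L') {bb b' : ℕ × ℕ}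
    (hb : IsPre U₁ U₂ x bb b') :
    prefixLen U₁' U₂' L' (mu U₁ U₂ x (bb.1, bb.2 - 1)) ≤
      prefixLen U₁' U₂' L' (b'.1, b'.2 - 1) := by
  rcases hb with ⟨hbm, rfl⟩ | ⟨hbd, rfl⟩
  · obtain ⟨i, j⟩ := bb
    have hne := hbm.2
    obtain ⟨hi, hj1, hj2⟩ := hbm.1
    simp only at hi hj1 hj2 hne
    rcases Nat.lt_or_ge j 2 with hj | hj
    · -- j = 1, so bb = (1,1)
      have hj' : j = 1 := by omega
      subst hj'
      have hmu0 : mu U₁ U₂ x (i, 0) = (i, 0) := by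
        show (i, 0 + ((word U₁ U₂ i).take 0).count x - 1) = (i, 0)
        simp
      rw [show (((i:ℕ), 1).1, ((i:ℕ), 1).2 - 1) = ((i:ℕ), 0) from rfl, hmu0, prefixLen_zero]
      omega
    · obtain ⟨k, rfl⟩ : ∃ k, j = k + 2 := ⟨j - 2, by omega⟩
      by_cases hlx : letter U₁ U₂ (i, k+2) = some x
      · have hd : Dmem U₁ U₂ x (i, k+2) :=
          C.dmem_of_letter ⟨hi, by omega, hj2⟩ hlx
        have hstep := C.mu_step_eq hd
        have heq : ((mu U₁ U₂ x (i, k+2)).1, (mu U₁ U₂ x (i, k+2)).2 - 1) =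
            plusb U₁ U₂ x (i, k+2) := by
          apply Prod.ext
          · rfl
          · have h1 := hstep.1
            omega
        rw [heq]
        have := C.Q_pred_lt_plusb hd
        exact le_of_lt this
      · have hstep := C.mu_step_ne hi hj2 hlx
        have heq : ((mu U₁ U₂ x (i, k+2)).1, (mu U₁ U₂ x (i, k+2)).2 - 1) =
            mu U₁ U₂ x (i, k+1) := by
          apply Prod.ext
          · rfl
          · omega
        rw [heq]
        exact le_refl _
  · have hstep := (C.mu_step_eq hbd).2
    have heq : ((plusb U₁ U₂ x bb).1, (plusb U₁ U₂ x bb).2 - 1) =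
        mu U₁ U₂ x (bb.1, bb.2 - 1) := by
      apply Prod.ext
      · rfl
      · omega
    rw [heq]

lemma Ctx.Q_le_mu (C : Ctx U₁ U₂ U₁' U₂' t₁ t₂ lt lt' x y L L') {bb b' : ℕ × ℕ}
    (hb : IsPre U₁ U₂ x bb b') :
    prefixLen U₁' U₂' L' b' ≤ prefixLen U₁' U₂' L' (mu U₁ U₂ x bb) := by
  rcases hb with ⟨hbm, rfl⟩ | ⟨hbd, rfl⟩
  · exact le_refl _
  · exact le_of_lt (C.Q_plusb_lt_mu hbd)

lemma Ctx.P_pred_lt (C : Ctx U₁ U₂ U₁' U₂' t₁ t₂ lt lt' x y L L') {bb cc : ℕ × ℕ}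
    (hbB : Boundary U₁ U₂ bb) (hcm : Bminus U₁ U₂ cc)
    (hq : prefixLen U₁' U₂' L' (mu U₁ U₂ x (bb.1, bb.2 - 1)) <
      prefixLen U₁' U₂' L' (mu U₁ U₂ x cc)) :
    prefixLen U₁ U₂ L (bb.1, bb.2 - 1) < prefixLen U₁ U₂ L cc := by
  rcases Nat.lt_or_ge bb.2 2 with hj | hj
  · have h1 : bb.2 - 1 = 0 := by omega
    rw [h1, prefixLen_zero]
    exact boundary_pos C.hL hcm.1
  · by_cases h21 : (bb.1, bb.2 - 1) = ((2:ℕ), (1:ℕ))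
    · rw [h21, C.P_two_one]
      exact C.P_gt_Ly hcm.1 hcm.2
    · have hpred : Bminus U₁ U₂ (bb.1, bb.2 - 1) := ⟨Boundary.pred hbB hj, h21⟩
      exact (C.T1 hpred hcm).mpr hq

lemma Ctx.cut_transfer (C : Ctx U₁ U₂ U₁' U₂' t₁ t₂ lt lt' x y L L') {bb cc b' c' : ℕ × ℕ}
    (hb : IsPre U₁ U₂ x bb b') (hc : IsPre U₁ U₂ x cc c')
    (h : Cuts U₁' U₂' lt' b' c') : Cuts U₁ U₂ lt bb cc := by
  obtain ⟨q1, q2⟩ := C.cuts'_q h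
  have hne' : b' ≠ c' := h.2.2.1
  have hQ1 : prefixLen U₁' U₂' L' (mu U₁ U₂ x (bb.1, bb.2 - 1)) <
      prefixLen U₁' U₂' L' (mu U₁ U₂ x cc) :=
    lt_of_le_of_lt (C.Q_pred_le hb) (lt_of_lt_of_le q1 (C.Q_le_mu hc))
  have hQ2 : prefixLen U₁' U₂' L' (mu U₁ U₂ x (cc.1, cc.2 - 1)) <
      prefixLen U₁' U₂' L' (mu U₁ U₂ x bb) :=
    lt_of_le_of_lt (C.Q_pred_le hc) (lt_of_lt_of_le q2 (C.Q_le_mu hb))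
  have hne : bb ≠ cc := by
    rintro rfl
    rcases hb with ⟨hbm, rfl⟩ | ⟨hbd, rfl⟩ <;> rcases hc with ⟨hcm, hce⟩ | ⟨hcd, hce⟩
    · exact hne' hce
    · -- b' = mu bb, c' = plusb bb
      have heq : ((mu U₁ U₂ x bb).1, (mu U₁ U₂ x bb).2 - 1) = plusb U₁ U₂ x bb := by
        apply Prod.ext
        · rfl
        · have := (C.mu_step_eq hcd).1
          omega
      rw [heq, hce] at q1
      omega
    · -- b' = plusb bb, c' = mu bb
      have heq : ((mu U₁ U₂ x bb).1, (mu U₁ U₂ x bb).2 - 1) = plusb U₁ U₂ x bb := by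
        apply Prod.ext
        · rfl
        · have := (C.mu_step_eq hbd).1
          omega
      rw [← hce, heq] at q2
      omega
    · exact hne' hce
  exact C.cuts_build hb.boundary hc.boundary hne
    (C.P_pred_lt hb.boundary (hc.bminus C) hQ1)
    (C.P_pred_lt hc.boundary (hb.bminus C) hQ2)

end Main5

section Main6
variable {X : Type*} [DecidableEq X]
variable {U₁ U₂ U₁' U₂' t₁ t₂ : List X} {lt lt' : BRel} {x y : X} {L L' : X → ℕ}

lemma Ctx.mirrors_two_one (C : Ctx U₁ U₂ U₁' U₂' t₁ t₂ lt lt' x y L L') {d : ℕ × ℕ}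
    (hd : Boundary U₁ U₂ d) (hne : d ≠ (2,1)) (hlet : letter U₁ U₂ d = some y) :
    Mirrors U₁ U₂ lt (2,1) d := by
  apply C.mirror_build C.boundary_two_one hd (by rw [C.letter_two_one, hlet])
  rw [C.P_two_one]
  have := C.P_gt_Ly hd hne
  omega

lemma Ctx.mirrors_one_one (C : Ctx U₁ U₂ U₁' U₂' t₁ t₂ lt lt' x y L L') {d : ℕ × ℕ}
    (hd : Dmem U₁ U₂ x d) : Mirrors U₁ U₂ lt (1,1) d := by
  apply C.mirror_build C.boundary_one_one hd.1 (by rw [C.letter_one_one, hd.2.1])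
  rw [C.P_one_one]
  have := C.P_gt_Lx hd
  omega

lemma Ctx.mirrors_one_one_iff (C : Ctx U₁ U₂ U₁' U₂' t₁ t₂ lt lt' x y L L') {d : ℕ × ℕ}
    (hd : Boundary U₁ U₂ d) :
    Mirrors U₁ U₂ lt (1,1) d ↔ Dmem U₁ U₂ x d := by
  constructor
  · rintro ⟨h11, hdB, hlet, hdisj⟩
    rw [C.letter_one_one] at hlet
    refine ⟨hd, hlet.symm, ?_⟩
    rintro rfl
    rcases hdisj with h | h
    · exact h ⟨C.hbo.irrefl _ (EBoundary_of_boundary C.boundary_one_one),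
        C.hbo.irrefl _ (EBoundary_of_boundary C.boundary_one_one)⟩
    · exact h ⟨C.hbo.irrefl _ (EBoundary_zero (Or.inl rfl)),
        C.hbo.irrefl _ (EBoundary_zero (Or.inl rfl))⟩
  · exact C.mirrors_one_one

lemma Ctx.cuts_two_one_iff (C : Ctx U₁ U₂ U₁' U₂' t₁ t₂ lt lt' x y L L') {c : ℕ × ℕ} :
    Cuts U₁ U₂ lt (2,1) c ↔ c = (1,1) := by
  constructor
  · rintro ⟨h21, hcB, hne, h1, h2⟩
    rcases Nat.lt_or_ge c.2 2 with hc2 | hc2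
    · -- c.2 = 1
      obtain ⟨i, j⟩ := c
      have hj : j = 1 := by have := hcB.2.1; simp only at this hc2 ⊢; omega
      subst hj
      rcases hcB.1 with h | h
      · simp only at h; subst h; rfl
      · simp only at h; subst h; exact absurd rfl hne
    · exfalso
      have hpredB : Boundary U₁ U₂ (c.1, c.2 - 1) := Boundary.pred hcB (by omega)
      have hP := (C.hco _ _ hpredB C.boundary_two_one).mp h2
      rw [C.P_two_one] at hP
      by_cases hp21 : (c.1, c.2 - 1) = ((2:ℕ), (1:ℕ))
      · rw [hp21, C.P_two_one] at hP; omega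
      · have := C.P_gt_Ly hpredB hp21; omega
  · rintro rfl
    refine C.cuts_build C.boundary_two_one C.boundary_one_one (by decide) ?_ ?_
    · rw [show (((2:ℕ),(1:ℕ)).1, ((2:ℕ),(1:ℕ)).2 - 1) = ((2:ℕ), (0:ℕ)) from rfl,
        prefixLen_zero]
      exact boundary_pos C.hL C.boundary_one_one
    · rw [show (((1:ℕ),(1:ℕ)).1, ((1:ℕ),(1:ℕ)).2 - 1) = ((1:ℕ), (0:ℕ)) from rfl,
        prefixLen_zero]
      exact boundary_pos C.hL C.boundary_two_one

lemma Ctx.cuts_one_one_two_one (C : Ctx U₁ U₂ U₁' U₂' t₁ t₂ lt lt' x y L L') :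
    Cuts U₁ U₂ lt (1,1) (2,1) := by
  refine C.cuts_build C.boundary_one_one C.boundary_two_one (by decide) ?_ ?_
  · rw [show (((1:ℕ),(1:ℕ)).1, ((1:ℕ),(1:ℕ)).2 - 1) = ((1:ℕ), (0:ℕ)) from rfl,
      prefixLen_zero]
    exact boundary_pos C.hL C.boundary_two_one
  · rw [show (((2:ℕ),(1:ℕ)).1, ((2:ℕ),(1:ℕ)).2 - 1) = ((2:ℕ), (0:ℕ)) from rfl,
      prefixLen_zero]
    exact boundary_pos C.hL C.boundary_one_one

/-- the fecundity of `(2,1)`: `f (2,1) = 1 + ∑_{d ∈ D} f d`. -/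
lemma Ctx.f21 (C : Ctx U₁ U₂ U₁' U₂' t₁ t₂ lt lt' x y L L') {f : ℕ × ℕ → ℕ}
    (hf : IsFecundity U₁ U₂ lt f) :
    f (2,1) = 1 + ((boundaryFinset U₁ U₂).filter
      (fun d => letter U₁ U₂ d = some x ∧ d ≠ (1,1))).sum f := by
  have h := hf (2,1) (mem_boundaryFinset.mpr C.boundary_two_one)
  have hcf : (boundaryFinset U₁ U₂).filter (fun c => Cuts U₁ U₂ lt (2,1) c) = {(1,1)} := by
    apply Finset.ext
    intro c
    simp only [Finset.mem_filter, Finset.mem_singleton]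
    constructor
    · rintro ⟨_, hc⟩
      exact C.cuts_two_one_iff.mp hc
    · rintro rfl
      exact ⟨mem_boundaryFinset.mpr C.boundary_one_one, C.cuts_two_one_iff.mpr rfl⟩
  have hmf : (boundaryFinset U₁ U₂).filter (fun d => Mirrors U₁ U₂ lt (1,1) d) =
      (boundaryFinset U₁ U₂).filter (fun d => letter U₁ U₂ d = some x ∧ d ≠ (1,1)) := by
    apply Finset.ext
    intro d
    simp only [Finset.mem_filter]
    constructor
    · rintro ⟨hmem, hm⟩
      have := (C.mirrors_one_one_iff (mem_boundaryFinset.mp hmem)).mp hm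
      exact ⟨hmem, this.2.1, this.2.2⟩
    · rintro ⟨hmem, h1, h2⟩
      exact ⟨hmem, (C.mirrors_one_one_iff (mem_boundaryFinset.mp hmem)).mpr
        ⟨mem_boundaryFinset.mp hmem, h1, h2⟩⟩
  rw [h, hcf, Finset.sup_singleton, hmf]

/-- the fecundity of `(1,1)` dominates the mirror class of `(2,1)`. -/
lemma Ctx.f11_ge (C : Ctx U₁ U₂ U₁' U₂' t₁ t₂ lt lt' x y L L') {f : ℕ × ℕ → ℕ}
    (hf : IsFecundity U₁ U₂ lt f) :
    1 + ((boundaryFinset U₁ U₂).filter (fun d => Mirrors U₁ U₂ lt (2,1) d)).sum f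
      ≤ f (1,1) := by
  have h := hf (1,1) (mem_boundaryFinset.mpr C.boundary_one_one)
  rw [h]
  have hmem : ((2:ℕ),(1:ℕ)) ∈ (boundaryFinset U₁ U₂).filter
      (fun c => Cuts U₁ U₂ lt (1,1) c) :=
    Finset.mem_filter.mpr ⟨mem_boundaryFinset.mpr C.boundary_two_one,
      C.cuts_one_one_two_one⟩
  have h2 : ((boundaryFinset U₁ U₂).filter (fun d => Mirrors U₁ U₂ lt (2,1) d)).sum f ≤
      ((boundaryFinset U₁ U₂).filter (fun c => Cuts U₁ U₂ lt (1,1) c)).sup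
        (fun c => ((boundaryFinset U₁ U₂).filter (fun d => Mirrors U₁ U₂ lt c d)).sum f) :=
    Finset.le_sup (f := fun c => ((boundaryFinset U₁ U₂).filter
      (fun d => Mirrors U₁ U₂ lt c d)).sum f) hmem
  omega

end Main6

section Main7
variable {X : Type*} [DecidableEq X]

lemma fec_pos {W₁ W₂ : List X} {lt : BRel} {f : ℕ × ℕ → ℕ} (hf : IsFecundity W₁ W₂ lt f)
    {b : ℕ × ℕ} (hb : b ∈ boundaryFinset W₁ W₂) : 1 ≤ f b := by
  rw [hf b hb]; omega

variable {U₁ U₂ U₁' U₂' t₁ t₂ : List X} {lt lt' : BRel} {x y : X} {L L' : X → ℕ}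

lemma Ctx.main (C : Ctx U₁ U₂ U₁' U₂' t₁ t₂ lt lt' x y L L') {f f' : ℕ × ℕ → ℕ}
    (hf : IsFecundity U₁ U₂ lt f) (hf' : IsFecundity U₁' U₂' lt' f') :
    ∀ n bb b', IsPre U₁ U₂ x bb b' → f' b' ≤ n → f' b' ≤ f bb := by
  intro n
  induction n with
  | zero =>
    intro bb b' hpre hle
    have := fec_pos hf' (mem_boundaryFinset.mpr (hpre.boundary' C))
    omega
  | succ n ih =>
    intro bb b' hpre hle
    have hbbB : Boundary U₁ U₂ bb := hpre.boundary
    have hbbm : bb ∈ boundaryFinset U₁ U₂ := mem_boundaryFinset.mpr hbbB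
    have hrec := hf bb hbbm
    have hrec' := hf' b' (mem_boundaryFinset.mpr (hpre.boundary' C))
    rcases Finset.eq_empty_or_nonempty
      ((boundaryFinset U₁' U₂').filter (fun c => Cuts U₁' U₂' lt' b' c)) with hemp | hnemp
    · rw [hemp, Finset.sup_empty] at hrec'
      simp only [Nat.bot_eq_zero] at hrec'
      have := fec_pos hf hbbm
      omega
    · obtain ⟨c', hc'mem, hsup⟩ := Finset.exists_mem_eq_sup _ hnemp
        (fun c => ((boundaryFinset U₁' U₂').filter (fun d => Mirrors U₁' U₂' lt' c d)).sum f')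
      have hcut' : Cuts U₁' U₂' lt' b' c' := (Finset.mem_filter.mp hc'mem).2
      set M' := (boundaryFinset U₁' U₂').filter (fun d => Mirrors U₁' U₂' lt' c' d) with hM'
      have hfb' : f' b' = 1 + M'.sum f' := by rw [hrec', hsup]
      have hterm : ∀ d' ∈ M', f' d' ≤ n := by
        intro d' hd'
        have h1 : f' d' ≤ M'.sum f' := Finset.single_le_sum (fun i _ => Nat.zero_le _) hd'
        omega
      set A₁ := (boundaryFinset U₁ U₂).filter
        (fun d => d ≠ (2,1) ∧ Mirrors U₁' U₂' lt' c' (mu U₁ U₂ x d)) with hA₁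
      set A₂ := (boundaryFinset U₁ U₂).filter
        (fun d => (letter U₁ U₂ d = some x ∧ d ≠ (1,1)) ∧
          Mirrors U₁' U₂' lt' c' (plusb U₁ U₂ x d)) with hA₂
      have hA₁m : ∀ d ∈ A₁, Bminus U₁ U₂ d := by
        intro d hd
        rw [hA₁] at hd
        obtain ⟨h1, h2, _⟩ := Finset.mem_filter.mp hd
        exact ⟨mem_boundaryFinset.mp h1, h2⟩
      have hA₂m : ∀ d ∈ A₂, Dmem U₁ U₂ x d := by
        intro d hd
        rw [hA₂] at hd
        obtain ⟨h1, h2, _⟩ := Finset.mem_filter.mp hd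
        exact ⟨mem_boundaryFinset.mp h1, h2.1, h2.2⟩
      have hA₁mir : ∀ d ∈ A₁, Mirrors U₁' U₂' lt' c' (mu U₁ U₂ x d) := by
        intro d hd
        rw [hA₁] at hd
        exact (Finset.mem_filter.mp hd).2.2
      have hA₂mir : ∀ d ∈ A₂, Mirrors U₁' U₂' lt' c' (plusb U₁ U₂ x d) := by
        intro d hd
        rw [hA₂] at hd
        exact (Finset.mem_filter.mp hd).2.2
      have hsplit : M' = A₁.image (mu U₁ U₂ x) ∪ A₂.image (plusb U₁ U₂ x) := by
        apply Finset.ext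
        intro e
        simp only [Finset.mem_union, Finset.mem_image]
        constructor
        · intro he
          rw [hM'] at he
          obtain ⟨hmem, hmir⟩ := Finset.mem_filter.mp he
          rcases C.classify (mem_boundaryFinset.mp hmem) with ⟨b, hb, rfl⟩ | ⟨d, hd, rfl⟩
          · left
            refine ⟨b, ?_, rfl⟩
            rw [hA₁]
            exact Finset.mem_filter.mpr ⟨mem_boundaryFinset.mpr hb.1, hb.2, hmir⟩
          · right
            refine ⟨d, ?_, rfl⟩
            rw [hA₂]
            exact Finset.mem_filter.mpr ⟨mem_boundaryFinset.mpr hd.1, ⟨hd.2.1, hd.2.2⟩, hmir⟩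
        · rintro (⟨b, hb, rfl⟩ | ⟨d, hd, rfl⟩)
          · rw [hM']
            exact Finset.mem_filter.mpr
              ⟨mem_boundaryFinset.mpr (C.boundary_mu (hA₁m b hb)), hA₁mir b hb⟩
          · rw [hM']
            exact Finset.mem_filter.mpr
              ⟨mem_boundaryFinset.mpr (C.boundary_plusb (hA₂m d hd)), hA₂mir d hd⟩
      have hdisj : Disjoint (A₁.image (mu U₁ U₂ x)) (A₂.image (plusb U₁ U₂ x)) := by
        rw [Finset.disjoint_left]
        rintro e he1 he2
        obtain ⟨b, hb, rfl⟩ := Finset.mem_image.mp he1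
        obtain ⟨d, hd, heq⟩ := Finset.mem_image.mp he2
        exact C.not_bpminus_plusb (hA₂m d hd) ⟨b, hA₁m b hb, heq.symm⟩
      have hsum1 : M'.sum f' = A₁.sum (fun d => f' (mu U₁ U₂ x d)) +
          A₂.sum (fun d => f' (plusb U₁ U₂ x d)) := by
        rw [hsplit, Finset.sum_union hdisj,
          Finset.sum_image (fun a ha b hb h => C.mu_inj (hA₁m a ha) (hA₁m b hb) h),
          Finset.sum_image (fun a ha b hb h => C.plusb_inj (hA₂m a ha) (hA₂m b hb) h)]
      have hmem1 : ∀ d ∈ A₁, mu U₁ U₂ x d ∈ M' := by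
        intro d hd
        rw [hsplit]
        exact Finset.mem_union_left _ (Finset.mem_image_of_mem _ hd)
      have hmem2 : ∀ d ∈ A₂, plusb U₁ U₂ x d ∈ M' := by
        intro d hd
        rw [hsplit]
        exact Finset.mem_union_right _ (Finset.mem_image_of_mem _ hd)
      have hIH1 : A₁.sum (fun d => f' (mu U₁ U₂ x d)) ≤ A₁.sum f :=
        Finset.sum_le_sum (fun d hd =>
          ih d (mu U₁ U₂ x d) (Or.inl ⟨hA₁m d hd, rfl⟩) (hterm _ (hmem1 d hd)))
      have hIH2 : A₂.sum (fun d => f' (plusb U₁ U₂ x d)) ≤ A₂.sum f :=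
        Finset.sum_le_sum (fun d hd =>
          ih d (plusb U₁ U₂ x d) (Or.inr ⟨hA₂m d hd, rfl⟩) (hterm _ (hmem2 d hd)))
      rcases C.classify hcut'.2.1 with ⟨cc, hccm, hcc'⟩ | ⟨cc, hccd, hcc'⟩
      · -- c' = mu cc
        have hccB : Boundary U₁ U₂ cc := hccm.1
        have hcutcc : Cuts U₁ U₂ lt bb cc :=
          C.cut_transfer hpre (Or.inl ⟨hccm, hcc'⟩) hcut'
        have hccCF : cc ∈ (boundaryFinset U₁ U₂).filter (fun c => Cuts U₁ U₂ lt bb c) :=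
          Finset.mem_filter.mpr ⟨mem_boundaryFinset.mpr hccB, hcutcc⟩
        have hsupcc : ((boundaryFinset U₁ U₂).filter (fun d => Mirrors U₁ U₂ lt cc d)).sum f ≤
            ((boundaryFinset U₁ U₂).filter (fun c => Cuts U₁ U₂ lt bb c)).sup
              (fun c => ((boundaryFinset U₁ U₂).filter (fun d => Mirrors U₁ U₂ lt c d)).sum f) :=
          Finset.le_sup (f := fun c => ((boundaryFinset U₁ U₂).filter
            (fun d => Mirrors U₁ U₂ lt c d)).sum f) hccCF
        have hA1sub : A₁ ⊆ (boundaryFinset U₁ U₂).filter (fun e => Mirrors U₁ U₂ lt cc e) := by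
          intro d hd
          have hdm : Bminus U₁ U₂ d := hA₁m d hd
          have h3 := hA₁mir d hd
          obtain ⟨hleq, hqne⟩ := C.mirror'_forward h3
          rw [← hcc', C.letter_mu hccm, C.letter_mu hdm] at hleq
          have hqne2 : prefixLen U₁' U₂' L' (mu U₁ U₂ x cc) ≠
              prefixLen U₁' U₂' L' (mu U₁ U₂ x d) := by rw [hcc']; exact hqne
          have hPne : prefixLen U₁ U₂ L cc ≠ prefixLen U₁ U₂ L d :=
            fun hP => hqne2 ((C.T1eq hccm hdm).mp hP)
          exact Finset.mem_filter.mpr ⟨mem_boundaryFinset.mpr hdm.1,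
            C.mirror_build hccB hdm.1 hleq hPne⟩
        by_cases hy' : letter U₁ U₂ cc = some y
        · -- letter-y case: absorb (2,1)
          have h21mem : ((2:ℕ),(1:ℕ)) ∈ (boundaryFinset U₁ U₂).filter
              (fun e => Mirrors U₁ U₂ lt cc e) :=
            Finset.mem_filter.mpr ⟨mem_boundaryFinset.mpr C.boundary_two_one,
              C.mirror_build hccB C.boundary_two_one (by rw [C.letter_two_one, hy'])
                (by rw [C.P_two_one]; have := C.P_gt_Ly hccB hccm.2; omega)⟩
          have hA1sub' : A₁ ⊆ ((boundaryFinset U₁ U₂).filter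
              (fun e => Mirrors U₁ U₂ lt cc e)).erase (2,1) := by
            intro d hd
            refine Finset.mem_erase.mpr ⟨(hA₁m d hd).2, hA1sub hd⟩
          have hA2sub : A₂ ⊆ (boundaryFinset U₁ U₂).filter
              (fun d => letter U₁ U₂ d = some x ∧ d ≠ (1,1)) := by
            intro d hd
            have := hA₂m d hd
            exact Finset.mem_filter.mpr ⟨mem_boundaryFinset.mpr this.1, this.2.1, this.2.2⟩
          have hf21 := C.f21 hf
          have c2 : A₂.sum f ≤ ((boundaryFinset U₁ U₂).filter
              (fun d => letter U₁ U₂ d = some x ∧ d ≠ (1,1))).sum f :=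
            Finset.sum_le_sum_of_subset hA2sub
          have c3 : A₁.sum f ≤ (((boundaryFinset U₁ U₂).filter
              (fun d => Mirrors U₁ U₂ lt cc d)).erase (2,1)).sum f :=
            Finset.sum_le_sum_of_subset hA1sub'
          have c4 : f (2,1) + (((boundaryFinset U₁ U₂).filter
              (fun d => Mirrors U₁ U₂ lt cc d)).erase (2,1)).sum f =
              ((boundaryFinset U₁ U₂).filter (fun d => Mirrors U₁ U₂ lt cc d)).sum f :=
            Finset.add_sum_erase _ f h21mem
          omega
        · -- A₂ is empty
          have hA2emp : A₂ = ∅ := by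
            apply Finset.eq_empty_of_forall_notMem
            intro d hd
            have hdd : Dmem U₁ U₂ x d := hA₂m d hd
            obtain ⟨hleq, _⟩ := C.mirror'_forward (hA₂mir d hd)
            rw [← hcc', C.letter_mu hccm, C.letter_plusb hdd] at hleq
            exact hy' hleq
          rw [hA2emp, Finset.sum_empty] at hsum1
          have c3 : A₁.sum f ≤ ((boundaryFinset U₁ U₂).filter
              (fun d => Mirrors U₁ U₂ lt cc d)).sum f :=
            Finset.sum_le_sum_of_subset hA1sub
          omega
      · -- c' = plusb cc
        have hccB : Boundary U₁ U₂ cc := hccd.1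
        have hccm : Bminus U₁ U₂ cc := C.dmem_bminus hccd
        have hcutcc : Cuts U₁ U₂ lt bb cc :=
          C.cut_transfer hpre (Or.inr ⟨hccd, hcc'⟩) hcut'
        have hccCF : cc ∈ (boundaryFinset U₁ U₂).filter (fun c => Cuts U₁ U₂ lt bb c) :=
          Finset.mem_filter.mpr ⟨mem_boundaryFinset.mpr hccB, hcutcc⟩
        have hsupcc : ((boundaryFinset U₁ U₂).filter (fun d => Mirrors U₁ U₂ lt cc d)).sum f ≤
            ((boundaryFinset U₁ U₂).filter (fun c => Cuts U₁ U₂ lt bb c)).sup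
              (fun c => ((boundaryFinset U₁ U₂).filter (fun d => Mirrors U₁ U₂ lt c d)).sum f) :=
          Finset.le_sup (f := fun c => ((boundaryFinset U₁ U₂).filter
            (fun d => Mirrors U₁ U₂ lt c d)).sum f) hccCF
        have h11mem : ((1:ℕ),(1:ℕ)) ∈ (boundaryFinset U₁ U₂).filter
            (fun e => Mirrors U₁ U₂ lt cc e) :=
          Finset.mem_filter.mpr ⟨mem_boundaryFinset.mpr C.boundary_one_one,
            C.mirror_build hccB C.boundary_one_one (by rw [C.letter_one_one, hccd.2.1])
              (by rw [C.P_one_one]; have := C.P_gt_Lx hccd; omega)⟩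
        have hA1sub : A₁ ⊆ (boundaryFinset U₁ U₂).filter
            (fun e => Mirrors U₁ U₂ lt (2,1) e) := by
          intro d hd
          have hdm : Bminus U₁ U₂ d := hA₁m d hd
          obtain ⟨hleq, _⟩ := C.mirror'_forward (hA₁mir d hd)
          rw [← hcc', C.letter_plusb hccd, C.letter_mu hdm] at hleq
          exact Finset.mem_filter.mpr ⟨mem_boundaryFinset.mpr hdm.1,
            C.mirrors_two_one hdm.1 hdm.2 hleq.symm⟩
        have hA2sub : A₂ ⊆ ((boundaryFinset U₁ U₂).filter
            (fun e => Mirrors U₁ U₂ lt cc e)).erase (1,1) := by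
          intro d hd
          have hdd : Dmem U₁ U₂ x d := hA₂m d hd
          refine Finset.mem_erase.mpr ⟨hdd.2.2, ?_⟩
          obtain ⟨hleq, hqne⟩ := C.mirror'_forward (hA₂mir d hd)
          have hqne2 : prefixLen U₁' U₂' L' (plusb U₁ U₂ x cc) ≠
              prefixLen U₁' U₂' L' (plusb U₁ U₂ x d) := by rw [hcc']; exact hqne
          have hqq : prefixLen U₁' U₂' L' (mu U₁ U₂ x cc) ≠
              prefixLen U₁' U₂' L' (mu U₁ U₂ x d) := by
            rw [C.Q_succ_x hccd, C.Q_succ_x hdd]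
            omega
          have hPne : prefixLen U₁ U₂ L cc ≠ prefixLen U₁ U₂ L d :=
            fun hp => hqq ((C.T1eq hccm (C.dmem_bminus hdd)).mp hp)
          exact Finset.mem_filter.mpr ⟨mem_boundaryFinset.mpr hdd.1,
            C.mirror_build hccB hdd.1 (by rw [hccd.2.1, hdd.2.1]) hPne⟩
        have hf11 := C.f11_ge hf
        have c1 : A₁.sum f ≤ ((boundaryFinset U₁ U₂).filter
            (fun d => Mirrors U₁ U₂ lt (2,1) d)).sum f :=
          Finset.sum_le_sum_of_subset hA1sub
        have c2 : A₂.sum f ≤ (((boundaryFinset U₁ U₂).filter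
            (fun d => Mirrors U₁ U₂ lt cc d)).erase (1,1)).sum f :=
          Finset.sum_le_sum_of_subset hA2sub
        have c4 : f (1,1) + (((boundaryFinset U₁ U₂).filter
            (fun d => Mirrors U₁ U₂ lt cc d)).erase (1,1)).sum f =
            ((boundaryFinset U₁ U₂).filter (fun d => Mirrors U₁ U₂ lt cc d)).sum f :=
          Finset.add_sum_erase _ f h11mem
        omega

end Main7

/-- **Lemma.** After a case II coherent extended Nielsen transformation of an
extended word equation with acyclic cut graph, the sum of the fecundities of the
new boundaries in `B'⁺` is strictly less than the fecundity of `(2,1)`. -/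
theorem fecundity_sum_Bpplus_lt (U₁ U₂ U₁' U₂' : List X) (lt lt' : BRel) (x y : X)
    (h₁ : U₁ ≠ []) (h₂ : U₂ ≠ []) (hbo : BoundaryOrder U₁ U₂ lt)
    (hcoh : Coherent U₁ U₂ lt)
    (hII : NielsenIIxy U₁ U₂ lt U₁' U₂' lt' x y) (hcoh' : Coherent U₁' U₂' lt')
    (hacyc : Acyclic U₁ U₂ lt)
    (f f' : ℕ × ℕ → ℕ)
    (hf : IsFecundity U₁ U₂ lt f) (hf' : IsFecundity U₁' U₂' lt' f') :
    (((boundaryFinset U₁' U₂').filter fun b => ¬ Bpminus U₁ U₂ x b).sum f')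
      < f (2, 1) := by
  obtain ⟨hx, hy, hlt21, hU₁', hU₂', hbo', hmatch⟩ := hII
  obtain ⟨L, hL, hco⟩ := hcoh
  obtain ⟨L', hL', hco'⟩ := hcoh'
  rcases U₁ with _ | ⟨a, T₁⟩
  · exact absurd rfl h₁
  rcases U₂ with _ | ⟨b, T₂⟩
  · exact absurd rfl h₂
  have hax : a = x := by injection hx
  have hby : b = y := by injection hy
  subst hax
  subst hby
  have b11 : Boundary (a :: T₁) (b :: T₂) (1,1) := by
    refine ⟨Or.inl rfl, le_refl _, ?_⟩
    show 1 ≤ (word (a :: T₁) (b :: T₂) 1).length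
    rw [word_fst]
    simp
  have b21 : Boundary (a :: T₁) (b :: T₂) (2,1) := by
    refine ⟨Or.inr rfl, le_refl _, ?_⟩
    show 1 ≤ (word (a :: T₁) (b :: T₂) 2).length
    rw [word_snd]
    simp
  have hP11 : prefixLen (a :: T₁) (b :: T₂) L (1,1) = L a := by
    show (((word (a :: T₁) (b :: T₂) 1).take 1).map L).sum = L a
    rw [word_fst]
    simp
  have hP21 : prefixLen (a :: T₁) (b :: T₂) L (2,1) = L b := by
    show (((word (a :: T₁) (b :: T₂) 2).take 1).map L).sum = L b
    rw [word_snd]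
    simp
  have hyltx : L b < L a := by
    have := (hco (2,1) (1,1) b21 b11).mp hlt21
    rw [hP21, hP11] at this
    exact this
  have hyx : b ≠ a := by
    intro h
    rw [h] at hyltx
    exact lt_irrefl _ hyltx
  have e1' : U₁' = a :: expand a b T₁ := by
    rw [hU₁', expand_cons, if_pos rfl]
    rfl
  have e2' : U₂' = expand a b T₂ := by
    rw [hU₂', expand_cons, if_neg hyx]
    rfl
  have C : Ctx (a :: T₁) (b :: T₂) U₁' U₂' T₁ T₂ lt lt' a b L L' :=
    ⟨hyx, rfl, rfl, e1', e2', hbo, hbo', hL, hL', hco, hco', hyltx, hmatch⟩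
  have himg : (boundaryFinset U₁' U₂').filter
      (fun e => ¬ Bpminus (a :: T₁) (b :: T₂) a e) =
      ((boundaryFinset (a :: T₁) (b :: T₂)).filter
        (fun d => letter (a :: T₁) (b :: T₂) d = some a ∧ d ≠ (1,1))).image
          (plusb (a :: T₁) (b :: T₂) a) := by
    apply Finset.ext
    intro e
    simp only [Finset.mem_filter, Finset.mem_image]
    constructor
    · rintro ⟨hmem, hnb⟩
      rcases C.classify (mem_boundaryFinset.mp hmem) with ⟨bb, hbb, rfl⟩ | ⟨d, hd, rfl⟩
      · exact absurd ⟨bb, hbb, rfl⟩ hnb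
      · exact ⟨d, ⟨mem_boundaryFinset.mpr hd.1, hd.2.1, hd.2.2⟩, rfl⟩
    · rintro ⟨d, ⟨h1, h2, h3⟩, rfl⟩
      have hd : Dmem (a :: T₁) (b :: T₂) a d := ⟨mem_boundaryFinset.mp h1, h2, h3⟩
      exact ⟨mem_boundaryFinset.mpr (C.boundary_plusb hd), C.not_bpminus_plusb hd⟩
  rw [himg]
  have hDm : ∀ d ∈ (boundaryFinset (a :: T₁) (b :: T₂)).filter
      (fun d => letter (a :: T₁) (b :: T₂) d = some a ∧ d ≠ (1,1)),
      Dmem (a :: T₁) (b :: T₂) a d := by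
    intro d hd
    obtain ⟨h1, h2, h3⟩ := Finset.mem_filter.mp hd
    exact ⟨mem_boundaryFinset.mp h1, h2, h3⟩
  rw [Finset.sum_image (fun p hp q hq h => C.plusb_inj (hDm p hp) (hDm q hq) h)]
  have hle : ((boundaryFinset (a :: T₁) (b :: T₂)).filter
      (fun d => letter (a :: T₁) (b :: T₂) d = some a ∧ d ≠ (1,1))).sum
        (fun d => f' (plusb (a :: T₁) (b :: T₂) a d)) ≤
      ((boundaryFinset (a :: T₁) (b :: T₂)).filter
      (fun d => letter (a :: T₁) (b :: T₂) d = some a ∧ d ≠ (1,1))).sum f :=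
    Finset.sum_le_sum (fun d hd =>
      C.main hf hf' (f' (plusb (a :: T₁) (b :: T₂) a d)) d _
        (Or.inr ⟨hDm d hd, rfl⟩) (le_refl _))
  have hf21 := C.f21 hf
  omega

end ExtWordEq
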